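/- arXiv:2308.09860 — 11 statements merged into one kernel-verified Lean document; each statement's English description precedes it below -/
import Mathlib

section
/- Let d ≥ 1 and k ≥ 1. Let q : Fin (k+1) → EuclideanSpace ℝ (Fin d) be a closed sequence of reference points with q k = q 0, and let g : Fin k → ℝ be gains with ∑ i, g i = 0. If the family of k−1 direction vectors (q (i+1) − q i) for i = 0, 1, …, k−2 is linearly independent over ℝ, then there exists a point x ∈ EuclideanSpace ℝ (Fin d) such that for every i : Fin k, dist(x, q i)² − dist(x, q (i+1))² = g i. (A balanced circle whose directions, excluding one edge, are linearly independent is central.) -/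
lemma exists_inner_eq {E : Type*} [NormedAddCommGroup E] [InnerProductSpace ℝ E]
    {m : ℕ} (v : Fin m → E) (hv : LinearIndependent ℝ v) (c : Fin m → ℝ) :
    ∃ x : E, ∀ i, (inner ℝ (v i) x : ℝ) = c i := by
  classical
  set T : (Fin m → ℝ) →ₗ[ℝ] E := Fintype.linearCombination ℝ v with hT
  have hTapp : ∀ y : Fin m → ℝ, T y = ∑ i, y i • v i := fun y => by
    simp [hT, Fintype.linearCombination_apply]
  let P : E →ₗ[ℝ] (Fin m → ℝ) := LinearMap.pi (fun i => (innerSL ℝ (v i)).toLinearMap)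
  set L := P.comp T with hL
  have hinj : Function.Injective L := by
    rw [← LinearMap.ker_eq_bot, LinearMap.ker_eq_bot']
    intro y hy
    have h0 : ∀ i, (inner ℝ (v i) (T y) : ℝ) = 0 := fun i => congrFun hy i
    have hself : (inner ℝ (T y) (T y) : ℝ) = 0 := by
      conv_lhs => rw [hTapp y]
      rw [sum_inner]
      refine Finset.sum_eq_zero fun i _ => ?_
      rw [real_inner_smul_left, ← hTapp, h0 i, mul_zero]
    have hTy : T y = 0 := inner_self_eq_zero.mp hself
    have := Fintype.linearIndependent_iff.mp hv y (by rw [← hTapp]; exact hTy)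
    funext i; exact this i
  obtain ⟨y, hy⟩ := (LinearMap.injective_iff_surjective.mp hinj) c
  exact ⟨T y, fun i => congrFun hy i⟩

/-- A balanced circle whose direction vectors, excluding one edge, are linearly independent is
central: if `q k = q 0`, `∑ i, g i = 0`, and the `k − 1` directions `q (i+1) − q i` for
`i = 0, …, k − 2` are linearly independent, then there is a common point `x` of all the
Pythagorean hyperplanes `dist(x, q i)² − dist(x, q (i+1))² = g i`. -/
theorem central_of_balanced_of_linearIndependent
    (d k : ℕ) (hd : 1 ≤ d) (hk : 1 ≤ k)
    (q : Fin (k + 1) → EuclideanSpace ℝ (Fin d)) (hq : q (Fin.last k) = q 0)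
    (g : Fin k → ℝ) (hg : ∑ i, g i = 0)
    (hli : LinearIndependent ℝ (fun i : Fin (k - 1) =>
      q ⟨(i : ℕ) + 1, by have := i.isLt; omega⟩ - q ⟨(i : ℕ), by have := i.isLt; omega⟩)) :
    ∃ x : EuclideanSpace ℝ (Fin d),
      ∀ i : Fin k, dist x (q i.castSucc) ^ 2 - dist x (q i.succ) ^ 2 = g i := by
  classical
  set w : Fin k → EuclideanSpace ℝ (Fin d) := fun i => q i.succ - q i.castSucc with hw
  set c : Fin k → ℝ := fun i => (g i + ‖q i.succ‖ ^ 2 - ‖q i.castSucc‖ ^ 2) / 2 with hc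
  -- telescoping sums
  set F : ℕ → EuclideanSpace ℝ (Fin d) := fun n => q ⟨min n k, by omega⟩ with hF
  have hFsucc : ∀ j : Fin k, q j.succ = F ((j : ℕ) + 1) := fun j =>
    congrArg q (show j.succ = ⟨min ((j : ℕ) + 1) k, by omega⟩ by ext; simp)
  have hFcast : ∀ j : Fin k, q j.castSucc = F (j : ℕ) := fun j =>
    congrArg q (show j.castSucc = ⟨min (j : ℕ) k, by omega⟩ by ext; simp)
  have hFk : F k = q 0 := by
    rw [← hq]
    exact congrArg q (show (⟨min k k, by omega⟩ : Fin (k + 1)) = Fin.last k by ext; simp)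
  have hF0 : F 0 = q 0 :=
    congrArg q (show (⟨min 0 k, by omega⟩ : Fin (k + 1)) = 0 by ext; simp)
  have hwsum : ∑ j, w j = 0 := by
    have h1 : ∑ j, w j = ∑ j : Fin k, (F ((j : ℕ) + 1) - F (j : ℕ)) :=
      Finset.sum_congr rfl fun j _ => by rw [hw]; simp only; rw [hFsucc j, hFcast j]
    rw [h1, Fin.sum_univ_eq_sum_range (fun n => F (n + 1) - F n) k,
      Finset.sum_range_sub, hFk, hF0, sub_self]
  have hcsum : ∑ j, c j = 0 := by
    have h1 : ∑ j, c j = (∑ j, g j + ∑ j : Fin k, (‖F ((j : ℕ) + 1)‖ ^ 2 - ‖F (j : ℕ)‖ ^ 2)) / 2 := by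
      rw [← Finset.sum_add_distrib, ← Finset.sum_div]
      refine congrArg (· / 2) (Finset.sum_congr rfl fun j _ => ?_)
      rw [hFsucc j, hFcast j]; ring
    rw [h1, hg, Fin.sum_univ_eq_sum_range (fun n => ‖F (n + 1)‖ ^ 2 - ‖F n‖ ^ 2) k,
      Finset.sum_range_sub (fun n => ‖F n‖ ^ 2), hFk, hF0]
    simp
  -- solve on the independent part
  obtain ⟨x, hx⟩ := exists_inner_eq _ hli
    (fun i : Fin (k - 1) => c ⟨(i : ℕ), by have := i.isLt; omega⟩)
  have hlt : ∀ j : Fin k, (j : ℕ) < k - 1 → (inner ℝ (w j) x : ℝ) = c j := by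
    intro j hj
    have h1 : w j = q ⟨(j : ℕ) + 1, by omega⟩ - q ⟨(j : ℕ), by omega⟩ := by
      rw [hw]; simp only
      congr 1 <;> exact congrArg q (by ext; simp)
    have h2 := hx ⟨(j : ℕ), hj⟩
    simp only at h2
    rw [h1]
    convert h2 using 3 <;> simp
  have hall : ∀ j : Fin k, (inner ℝ (w j) x : ℝ) = c j := by
    intro j
    by_cases hj : (j : ℕ) < k - 1
    · exact hlt j hj
    · have hjval : (j : ℕ) = k - 1 := by have := j.isLt; omega
      have hsum : ∑ i : Fin k, ((inner ℝ (w i) x : ℝ) - c i) = 0 := by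
        rw [Finset.sum_sub_distrib, ← sum_inner, hwsum, hcsum, inner_zero_left, sub_zero]
      have herase : ∑ i ∈ Finset.univ.erase j, ((inner ℝ (w i) x : ℝ) - c i) = 0 := by
        refine Finset.sum_eq_zero fun i hi => ?_
        have hine : i ≠ j := (Finset.mem_erase.mp hi).1
        have hik : (i : ℕ) < k - 1 := by
          have h3 := i.isLt
          by_contra h4
          exact hine (Fin.ext (by omega))
        rw [hlt i hik, sub_self]
      have h5 := Finset.add_sum_erase Finset.univ
        (fun i => ((inner ℝ (w i) x : ℝ) - c i)) (Finset.mem_univ j)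
      rw [herase, add_zero] at h5
      have h6 := h5.trans hsum
      have h7 : (inner ℝ (w j) x : ℝ) - c j = 0 := h6
      linarith
  refine ⟨x, fun i => ?_⟩
  have hci := hall i
  rw [dist_eq_norm, dist_eq_norm, norm_sub_sq_real, norm_sub_sq_real]
  have hci' : (inner ℝ (q i.succ) x : ℝ) - inner ℝ (q i.castSucc) x
      = (g i + ‖q i.succ‖ ^ 2 - ‖q i.castSucc‖ ^ 2) / 2 := by
    have h8 : w i = q i.succ - q i.castSucc := rfl
    rw [h8, inner_sub_left] at hci
    exact hci
  have hcomm1 : (inner ℝ x (q i.succ) : ℝ) = inner ℝ (q i.succ) x := real_inner_comm _ _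
  have hcomm2 : (inner ℝ x (q i.castSucc) : ℝ) = inner ℝ (q i.castSucc) x := real_inner_comm _ _
  linarith
end

section
/- Let d ≥ 1 and 2 ≤ k ≤ d + 1. Let q : Fin k → EuclideanSpace ℝ (Fin d) be an affinely independent family of points (AffineIndependent ℝ q), and let g : Fin k → ℝ be gains with ∑ i, g i = 0. Then there exists a point x ∈ EuclideanSpace ℝ (Fin d) such that for every i : Fin k, dist(x, q i)² − dist(x, q (i+1))² = g i, where i+1 is taken cyclically in Fin k. (A balanced circle of length at most d+1 whose reference points are in affine general position is central.) -/
open RealInnerProductSpace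

lemma exists_inner_eq_aux {ι E : Type*} [Fintype ι] [NormedAddCommGroup E]
    [InnerProductSpace ℝ E] [FiniteDimensional ℝ E]
    {v : ι → E} (hv : LinearIndependent ℝ v) (a : ι → ℝ) :
    ∃ x : E, ∀ j, ⟪x, v j⟫ = a j := by
  classical
  set T : E →ₗ[ℝ] (ι → ℝ) :=
    LinearMap.pi (fun j => (innerSL ℝ (v j)).toLinearMap) with hT
  have hker : LinearMap.ker T = (Submodule.span ℝ (Set.range v))ᗮ := by
    ext x
    simp only [LinearMap.mem_ker, Submodule.mem_orthogonal]
    constructor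
    · intro h u hu
      induction hu using Submodule.span_induction with
      | mem u hu =>
        obtain ⟨j, rfl⟩ := hu
        have := congrFun h j
        simpa [hT] using this
      | zero => simp
      | add u w _ _ hu hw => simp [inner_add_left, hu, hw]
      | smul r u _ hu => simp [inner_smul_left, hu]
    · intro h
      funext j
      simpa [hT] using h (v j) (Submodule.subset_span ⟨j, rfl⟩)
  have hsurj : Function.Surjective T := by
    rw [← LinearMap.range_eq_top]
    apply Submodule.eq_top_of_finrank_eq
    have h1 := LinearMap.finrank_range_add_finrank_ker T
    have h2 := Submodule.finrank_add_finrank_orthogonal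
      (K := Submodule.span ℝ (Set.range v))
    have h3 : Module.finrank ℝ (Submodule.span ℝ (Set.range v)) = Fintype.card ι :=
      finrank_span_eq_card hv
    have h4 : Module.finrank ℝ (ι → ℝ) = Fintype.card ι := by
      simp [Module.finrank_pi]
    rw [hker] at h1
    omega
  obtain ⟨x, hx⟩ := hsurj a
  exact ⟨x, fun j => by rw [real_inner_comm]; exact congrFun hx j⟩


/-- A balanced circle of length at most `d + 1` whose reference points are affinely independent
is central: if `2 ≤ k ≤ d + 1`, the points `q : Fin k → ℝᵈ` are affinely independent, and
`∑ i, g i = 0`, then there is a common point `x` of all the Pythagorean hyperplanes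
`dist(x, q i)² − dist(x, q (i+1))² = g i`, where `i + 1` is taken cyclically in `Fin k`. -/
theorem central_of_balanced_of_affineIndependent
    (d k : ℕ) (hd : 1 ≤ d) (hk : 2 ≤ k) (hkd : k ≤ d + 1)
    (q : Fin k → EuclideanSpace ℝ (Fin d)) (hq : AffineIndependent ℝ q)
    (g : Fin k → ℝ) (hg : ∑ i, g i = 0) :
    ∃ x : EuclideanSpace ℝ (Fin d),
      ∀ i : Fin k,
        dist x (q i) ^ 2 - dist x (q ⟨((i : ℕ) + 1) % k, Nat.mod_lt _ (by omega)⟩) ^ 2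
          = g i := by
  classical
  have hk0 : 0 < k := by omega
  set cyc : Fin k → Fin k := fun i => ⟨((i : ℕ) + 1) % k, Nat.mod_lt _ hk0⟩ with hcyc
  set c : Fin k → ℝ := fun i => (‖q i‖ ^ 2 - ‖q (cyc i)‖ ^ 2 - g i) / 2 with hc
  set cf : ℕ → ℝ := fun t => if h : t < k then c ⟨t, h⟩ else 0 with hcf
  set s : ℕ → ℝ := fun n => ∑ t ∈ Finset.range n, cf t with hs
  have hmod : ∀ t : Fin k, ((t : ℕ) + 1) % k = if (t : ℕ) + 1 = k then 0 else (t : ℕ) + 1 := by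
    intro t
    have ht := t.isLt
    split
    · next h => simp [h]
    · next h => exact Nat.mod_eq_of_lt (by omega)
  have hinj : Function.Injective cyc := by
    intro i j hij
    have hi := i.isLt; have hj := j.isLt
    have hval : ((i : ℕ) + 1) % k = ((j : ℕ) + 1) % k := congrArg Fin.val hij
    rw [hmod i, hmod j] at hval
    ext
    split_ifs at hval <;> omega
  have hbij : Function.Bijective cyc := Finite.injective_iff_bijective.mp hinj
  have hsumc : ∑ j, c j = 0 := by
    have h1 : ∑ j, ‖q (cyc j)‖ ^ 2 = ∑ j, ‖q j‖ ^ 2 :=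
      hbij.sum_comp (fun j => ‖q j‖ ^ 2)
    simp only [hc, div_eq_mul_inv, ← Finset.sum_mul, Finset.sum_sub_distrib, h1, hg]
    ring
  have hcfj : ∀ j : Fin k, cf (j : ℕ) = c j := by
    intro j; simp [hcf, j.isLt]
  have hsk : s k = 0 := by
    have : ∑ t ∈ Finset.range k, cf t = ∑ j : Fin k, cf (j : ℕ) :=
      (Fin.sum_univ_eq_sum_range cf k).symm
    rw [hs]; simp only [this]
    rw [Finset.sum_congr rfl (fun j _ => hcfj j), hsumc]
  -- linear independence
  set z : Fin k := ⟨0, hk0⟩ with hz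
  set v : {j : Fin k // j ≠ z} → EuclideanSpace ℝ (Fin d) := fun j => q (j : Fin k) - q z with hv
  have hvi : LinearIndependent ℝ v := by
    have := (affineIndependent_iff_linearIndependent_vsub ℝ q z).mp hq
    simpa [hv, vsub_eq_sub] using this
  obtain ⟨x, hx⟩ := exists_inner_eq_aux hvi (fun j => - s ((j : Fin k) : ℕ))
  have hx' : ∀ j : Fin k, ⟪x, q j - q z⟫ = - s (j : ℕ) := by
    intro j
    by_cases h : j = z
    · subst h; simp [hs, hz]
    · exact hx ⟨j, h⟩
  have key : ∀ i : Fin k, ⟪x, q i - q (cyc i)⟫ = c i := by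
    intro i
    have expand : q i - q (cyc i) = (q i - q z) - (q (cyc i) - q z) := by abel
    rw [expand, inner_sub_right, hx' i, hx' (cyc i)]
    by_cases h : (i : ℕ) + 1 < k
    · have hv1 : ((cyc i : Fin k) : ℕ) = (i : ℕ) + 1 := by
        simp [hcyc, Nat.mod_eq_of_lt h]
      rw [hv1]
      have : s ((i : ℕ) + 1) = s (i : ℕ) + cf (i : ℕ) := by
        simp [hs, Finset.sum_range_succ]
      rw [this, hcfj i]; ring
    · have hik : (i : ℕ) + 1 = k := by have := i.isLt; omega
      have hv0 : ((cyc i : Fin k) : ℕ) = 0 := by simp [hcyc, hik]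
      rw [hv0]
      have h2 : s ((i : ℕ) + 1) = s (i : ℕ) + cf (i : ℕ) := by
        simp [hs, Finset.sum_range_succ]
      rw [hik, hsk] at h2
      have hs0 : s 0 = 0 := by simp [hs]
      have h3 := hcfj i
      linarith
  refine ⟨x, fun i => ?_⟩
  have hk2 := key i
  have hci : (⟨((i : ℕ) + 1) % k, Nat.mod_lt _ (by omega)⟩ : Fin k) = cyc i := rfl
  rw [hci]
  rw [inner_sub_right] at hk2
  have e1 : dist x (q i) ^ 2 = ‖x‖ ^ 2 - 2 * ⟪x, q i⟫ + ‖q i‖ ^ 2 := by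
    rw [dist_eq_norm, norm_sub_sq_real]
  have e2 : dist x (q (cyc i)) ^ 2 = ‖x‖ ^ 2 - 2 * ⟪x, q (cyc i)⟫ + ‖q (cyc i)‖ ^ 2 := by
    rw [dist_eq_norm, norm_sub_sq_real]
  rw [e1, e2]
  have : c i = (‖q i‖ ^ 2 - ‖q (cyc i)‖ ^ 2 - g i) / 2 := rfl
  linarith
end

section
/- Let E be a type, v : E → EuclideanSpace ℝ (Fin d), and c : E → ℝ. Let X be a finite subset of E that is a circuit of v, and let α : E → ℝ be a nontrivial linear dependency supported on X, i.e. ∑_{e ∈ X} α e • v e = 0 and α e ≠ 0 for some e ∈ X. Then the linear system ⟪v e, x⟫ = c e (for all e ∈ X) has a solution x ∈ EuclideanSpace ℝ (Fin d) if and only if ∑_{e ∈ X} (α e) * (c e) = 0. -/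
lemma exists_inner_eq_s3 {ι : Type*} [Fintype ι] {d : ℕ}
    (w : ι → EuclideanSpace ℝ (Fin d)) (hw : LinearIndependent ℝ w) (t : ι → ℝ) :
    ∃ x : EuclideanSpace ℝ (Fin d), ∀ i, (inner ℝ (w i) x : ℝ) = t i := by
  classical
  set S := Submodule.span ℝ (Set.range w) with hS
  haveI : FiniteDimensional ℝ S := inferInstance
  let T : S →ₗ[ℝ] (ι → ℝ) :=
    LinearMap.pi fun i => ((innerSL ℝ (w i)).toLinearMap.comp S.subtype)
  have hinj : Function.Injective T := by
    rw [← LinearMap.ker_eq_bot]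
    rw [Submodule.eq_bot_iff]
    rintro ⟨x, hxS⟩ hx
    have hx' : ∀ i, (inner ℝ (w i) x : ℝ) = 0 := fun i => congrFun hx i
    have hxo : x ∈ Sᗮ := by
      rw [hS]
      intro u hu
      refine Submodule.span_induction (fun u hu => ?_) (by simp) (fun a b _ _ ha hb => by
        simp [inner_add_left, ha, hb]) (fun r a _ ha => by
        simp [inner_smul_left, ha]) hu
      obtain ⟨i, rfl⟩ := hu
      exact hx' i
    have hz : (inner ℝ x x : ℝ) = 0 := Submodule.inner_right_of_mem_orthogonal hxS hxo
    have : x = 0 := by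
      have := inner_self_eq_zero (𝕜 := ℝ) (x := x)
      exact this.mp hz
    simpa using this
  have hrank : Module.finrank ℝ S = Module.finrank ℝ (ι → ℝ) := by
    rw [finrank_span_eq_card hw, Module.finrank_pi]
  have hsurj : Function.Surjective T :=
    (LinearMap.injective_iff_surjective_of_finrank_eq_finrank hrank).mp hinj
  obtain ⟨x, hx⟩ := hsurj t
  exact ⟨x, fun i => by simpa [T] using congrFun hx i⟩



/-- `X` is a circuit of the family of vectors `v`: the family `(v e)_{e ∈ X}` is linearly
dependent, but `(v e)_{e ∈ X'}` is linearly independent for every proper subset `X' ⊊ X`. -/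
def IsVecCircuit {E : Type*} {d : ℕ} (v : E → EuclideanSpace ℝ (Fin d)) (X : Finset E) : Prop :=
  ¬ LinearIndependent ℝ (fun e : X => v e.1) ∧
    ∀ Y : Finset E, Y ⊂ X → LinearIndependent ℝ (fun e : Y => v e.1)

/-- A set `S` is central for the data `(v, c)` when the linear system
`⟪v e, x⟫ = c e` (for `e ∈ S`) has a common solution `x`. -/
def IsCentral {E : Type*} {d : ℕ} (v : E → EuclideanSpace ℝ (Fin d)) (c : E → ℝ)
    (S : Set E) : Prop :=
  ∃ x : EuclideanSpace ℝ (Fin d), ∀ e ∈ S, (inner ℝ (v e) x : ℝ) = c e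

/-- A circuit `X` of `v` is central for `(v, c)` if and only if any nontrivial linear
dependency `α` supported on `X` satisfies `∑_{e ∈ X} α e * c e = 0`. -/
theorem central_circuit_iff_dependency_orthogonal
    {E : Type*} {d : ℕ} (v : E → EuclideanSpace ℝ (Fin d)) (c : E → ℝ)
    (X : Finset E) (hX : IsVecCircuit v X)
    (α : E → ℝ) (hα : ∑ e ∈ X, α e • v e = 0) (hnt : ∃ e ∈ X, α e ≠ 0) :
    IsCentral v c X ↔ ∑ e ∈ X, α e * c e = 0 := by
  unfold IsCentral
  classical
  constructor
  · rintro ⟨x, hx⟩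
    have h0 : ∑ e ∈ X, α e * (inner ℝ (v e) x : ℝ) = 0 := by
      have := congrArg (fun y => (inner ℝ y x : ℝ)) hα
      simpa only [sum_inner, real_inner_smul_left, inner_zero_left] using this
    calc ∑ e ∈ X, α e * c e = ∑ e ∈ X, α e * (inner ℝ (v e) x : ℝ) :=
          Finset.sum_congr rfl fun e he => by rw [hx e (Finset.mem_coe.mpr he)]
      _ = 0 := h0
  · intro h
    obtain ⟨e₀, he₀, hα₀⟩ := hnt
    have hY : X.erase e₀ ⊂ X := Finset.erase_ssubset he₀
    have hind := hX.2 _ hY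
    obtain ⟨x, hx⟩ := exists_inner_eq_s3 (fun e : (X.erase e₀ : Finset E) => v e.1) hind
      (fun e => c e.1)
    have hxY : ∀ e ∈ X.erase e₀, (inner ℝ (v e) x : ℝ) = c e := fun e he => hx ⟨e, he⟩
    have h1 : α e₀ • v e₀ + ∑ e ∈ X.erase e₀, α e • v e = 0 :=
      (Finset.add_sum_erase X (fun e => α e • v e) he₀).trans hα
    have h2 : α e₀ * (inner ℝ (v e₀) x : ℝ) + ∑ e ∈ X.erase e₀, α e * c e = 0 := by
      have h2' : α e₀ * (inner ℝ (v e₀) x : ℝ)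
          + ∑ e ∈ X.erase e₀, α e * (inner ℝ (v e) x : ℝ) = 0 := by
        have := congrArg (fun y => (inner ℝ y x : ℝ)) h1
        simpa only [inner_add_left, sum_inner, real_inner_smul_left, inner_zero_left]
          using this
      have hsc : ∑ e ∈ X.erase e₀, α e * (inner ℝ (v e) x : ℝ)
          = ∑ e ∈ X.erase e₀, α e * c e :=
        Finset.sum_congr rfl fun e he => by rw [hxY e he]
      rw [← hsc]; exact h2'
    have h3 : α e₀ * c e₀ + ∑ e ∈ X.erase e₀, α e * c e = 0 :=
      (Finset.add_sum_erase X (fun e => α e * c e) he₀).trans h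
    have key : (inner ℝ (v e₀) x : ℝ) = c e₀ :=
      mul_left_cancel₀ hα₀ (by linarith)
    refine ⟨x, fun e he => ?_⟩
    rcases eq_or_ne e e₀ with rfl | hne
    · exact key
    · exact hxY e (Finset.mem_erase.mpr ⟨hne, he⟩)
end

section
/- Let E be a type, v : E → EuclideanSpace ℝ (Fin d), c : E → ℝ, and let S ⊆ E be a finite subset. Then S is central (i.e. there exists x with ⟪v e, x⟫ = c e for all e ∈ S) if and only if every circuit X of v with X ⊆ S is central. -/
section Helpers

variable {E : Type*} {d : ℕ} (v : E → EuclideanSpace ℝ (Fin d))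

lemma vec_dep_iff (X : Finset E) :
    ¬ LinearIndependent ℝ (fun e : X => v e.1) ↔
      ∃ g : E → ℝ, ∑ e ∈ X, g e • v e = 0 ∧ ∃ e ∈ X, g e ≠ 0 := by
  classical
  rw [Fintype.not_linearIndependent_iff]
  constructor
  · rintro ⟨g, hg, i, hi⟩
    refine ⟨fun e => if h : e ∈ X then g ⟨e, h⟩ else 0, ?_, i.1, i.2, by simpa [i.2] using hi⟩
    rw [← Finset.sum_coe_sort X (fun e => (if h : e ∈ X then g ⟨e, h⟩ else 0) • v e), ← hg]
    exact Finset.sum_congr rfl fun i _ => by simp [i.2]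
  · rintro ⟨g, hg, e, he, hge⟩
    refine ⟨fun i => g i.1, ?_, ⟨e, he⟩, hge⟩
    rw [Finset.sum_coe_sort X (fun e => g e • v e)]
    exact hg

lemma vec_indep_iff (X : Finset E) :
    LinearIndependent ℝ (fun e : X => v e.1) ↔
      ∀ g : E → ℝ, ∑ e ∈ X, g e • v e = 0 → ∀ e ∈ X, g e = 0 := by
  rw [← not_iff_not, vec_dep_iff]
  push_neg
  rfl

lemma vec_indep_mono {X Y : Finset E} (hXY : X ⊆ Y)
    (hY : LinearIndependent ℝ (fun e : Y => v e.1)) :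
    LinearIndependent ℝ (fun e : X => v e.1) := by
  classical
  rw [vec_indep_iff] at hY ⊢
  intro g hg e he
  have h0 : ∑ e ∈ Y, (fun e => if e ∈ X then g e else 0) e • v e = 0 := by
    rw [← Finset.sum_subset hXY (by intro x _ hx; simp [hx])]
    simpa using hg
  simpa [he] using hY _ h0 e (hXY he)

lemma vec_mem_span_iff (B : Finset E) (x : EuclideanSpace ℝ (Fin d)) :
    x ∈ Submodule.span ℝ (v '' ↑B) ↔ ∃ g : E → ℝ, ∑ e ∈ B, g e • v e = x := by
  constructor
  · intro hx
    obtain ⟨l, hl, hlx⟩ := (Finsupp.mem_span_image_iff_linearCombination ℝ).1 hx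
    refine ⟨l, ?_⟩
    rw [← hlx, Finsupp.linearCombination_apply, Finsupp.sum]
    exact (Finset.sum_subset (fun i hi => by exact_mod_cast hl hi)
      (fun i _ hi => by simp [Finsupp.notMem_support_iff.1 hi])).symm
  · rintro ⟨g, rfl⟩
    exact Submodule.sum_mem _ fun e he =>
      Submodule.smul_mem _ _ (Submodule.subset_span ⟨e, he, rfl⟩)

/-- A finite dependent family contains a circuit. -/
lemma exists_circuit_subset : ∀ (X : Finset E),
    ¬ LinearIndependent ℝ (fun e : X => v e.1) → ∃ C ⊆ X, IsVecCircuit v C := by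
  classical
  intro X
  induction X using Finset.strongInduction with
  | _ X ih =>
    intro hX
    by_cases h : ∀ Y : Finset E, Y ⊂ X → LinearIndependent ℝ (fun e : Y => v e.1)
    · exact ⟨X, le_refl _, hX, h⟩
    · push_neg at h
      obtain ⟨Y, hYX, hY⟩ := h
      obtain ⟨C, hCY, hC⟩ := ih Y hYX hY
      exact ⟨C, hCY.trans hYX.subset, hC⟩

lemma circuit_mem_span [DecidableEq E] {X : Finset E} (hX : IsVecCircuit v X) {e : E}
    (he : e ∈ X) :
    v e ∈ Submodule.span ℝ (v '' ↑(X.erase e)) := by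
  classical
  obtain ⟨g, hg, f, hf, hgf⟩ := (vec_dep_iff v X).1 hX.1
  have hsum : g e • v e + ∑ x ∈ X.erase e, g x • v x = 0 := by
    rw [Finset.add_sum_erase _ (fun x => g x • v x) he]; exact hg
  have hge : g e ≠ 0 := by
    intro h0
    have hindep := hX.2 (X.erase e) (Finset.erase_ssubset he)
    rw [vec_indep_iff] at hindep
    have : ∑ x ∈ X.erase e, g x • v x = 0 := by simpa [h0] using hsum
    rcases eq_or_ne f e with rfl | hfe
    · exact hgf h0
    · exact hgf (hindep g this f (Finset.mem_erase.2 ⟨hfe, hf⟩))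
  rw [vec_mem_span_iff]
  refine ⟨fun x => -(g e)⁻¹ * g x, ?_⟩
  have hT : ∑ x ∈ X.erase e, g x • v x = -(g e • v e) := by
    rw [eq_neg_iff_add_eq_zero, add_comm]; exact hsum
  calc ∑ x ∈ X.erase e, (-(g e)⁻¹ * g x) • v x
      = (-(g e)⁻¹) • ∑ x ∈ X.erase e, g x • v x := by
        rw [Finset.smul_sum]; exact Finset.sum_congr rfl fun x _ => by rw [smul_smul]
    _ = v e := by
        rw [hT, smul_neg, neg_smul, neg_neg, smul_smul, inv_mul_cancel₀ hge, one_smul]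

/-- Solvability of the system on a linearly independent family. -/
lemma solvable_of_indep (c : E → ℝ) (B : Finset E)
    (hB : LinearIndependent ℝ (fun e : B => v e.1)) :
    ∃ x : EuclideanSpace ℝ (Fin d), ∀ e ∈ B, (inner ℝ (v e) x : ℝ) = c e := by
  classical
  induction B using Finset.induction with
  | empty => exact ⟨0, by simp⟩
  | @insert a B ha ih =>
    have hBindep := vec_indep_mono v (Finset.subset_insert a B) hB
    obtain ⟨x, hx⟩ := ih hBindep
    have hnot : v a ∉ Submodule.span ℝ (v '' ↑B) := by
      intro hmem
      obtain ⟨g, hg⟩ := (vec_mem_span_iff v B (v a)).1 hmem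
      rw [vec_indep_iff] at hB
      have h0 : ∑ e ∈ insert a B, (fun e => if e = a then (-1 : ℝ) else g e) e • v e = 0 := by
        rw [Finset.sum_insert ha]
        have : ∑ e ∈ B, (fun e => if e = a then (-1 : ℝ) else g e) e • v e
            = ∑ e ∈ B, g e • v e :=
          Finset.sum_congr rfl fun e heB => by
            have : e ≠ a := fun h => ha (h ▸ heB)
            simp [this]
        rw [this, hg]; simp
      have := hB _ h0 a (Finset.mem_insert_self a B)
      simp at this
    set K : Submodule ℝ (EuclideanSpace ℝ (Fin d)) := Submodule.span ℝ (v '' ↑B) with hK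
    have hKfin : FiniteDimensional ℝ K := inferInstance
    set u : EuclideanSpace ℝ (Fin d) := v a - (K.orthogonalProjectionOnto (v a) : _) with hu
    have huK : u ∈ Kᗮ := Submodule.sub_starProjection_mem_orthogonal (K := K) (v a)
    have hvau : (inner ℝ (v a) u : ℝ) = inner ℝ u u := by
      have hproj : ((K.orthogonalProjectionOnto (v a) : EuclideanSpace ℝ (Fin d))) ∈ K :=
        (K.orthogonalProjectionOnto (v a)).2
      have : (inner ℝ ((K.orthogonalProjectionOnto (v a) : EuclideanSpace ℝ (Fin d))) u : ℝ) = 0 :=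
        real_inner_comm _ u ▸ (huK _ hproj)
      calc (inner ℝ (v a) u : ℝ)
          = inner ℝ (u + (K.orthogonalProjectionOnto (v a) : EuclideanSpace ℝ (Fin d))) u := by
            rw [hu, sub_add_cancel]
        _ = inner ℝ u u + ((0:ℝ)) := by rw [inner_add_left, this]
        _ = inner ℝ u u := by ring
    have hune : u ≠ 0 := by
      intro h0
      apply hnot
      have : v a = (K.orthogonalProjectionOnto (v a) : EuclideanSpace ℝ (Fin d)) := by
        rwa [hu, sub_eq_zero] at h0
      rw [this]; exact (K.orthogonalProjectionOnto (v a)).2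
    have hvau0 : (inner ℝ (v a) u : ℝ) ≠ 0 := by
      rw [hvau]
      exact fun h => hune (inner_self_eq_zero.1 h)
    refine ⟨x + ((c a - inner ℝ (v a) x) / inner ℝ (v a) u) • u, ?_⟩
    intro e heB
    rcases Finset.mem_insert.1 heB with rfl | heB'
    · rw [inner_add_right, real_inner_smul_right, div_mul_cancel₀ _ hvau0]
      ring
    · have hveK : v e ∈ K := Submodule.subset_span ⟨e, heB', rfl⟩
      have : (inner ℝ (v e) u : ℝ) = 0 := real_inner_comm _ u ▸ (huK _ hveK)
      rw [inner_add_right, real_inner_smul_right, this, mul_zero, add_zero]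
      exact hx e heB' 

end Helpers

/-- A finite set `S` is central if and only if every circuit of `v` contained in `S`
is central. -/
theorem central_iff_circuits_central
    {E : Type*} {d : ℕ} (v : E → EuclideanSpace ℝ (Fin d)) (c : E → ℝ) (S : Finset E) :
    IsCentral v c S ↔
      ∀ X : Finset E, IsVecCircuit v X → X ⊆ S → IsCentral v c X := by
  classical
  constructor
  · rintro ⟨x, hx⟩ X _ hXS
    exact ⟨x, fun e he => hx e (hXS he)⟩
  · intro hcirc
    set P := S.powerset.filter
      (fun T => LinearIndependent ℝ (fun e : {x // x ∈ T} => v e.1)) with hP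
    have hne : P.Nonempty := by
      refine ⟨∅, Finset.mem_filter.2 ⟨Finset.empty_mem_powerset S, ?_⟩⟩
      exact linearIndependent_empty_type
    obtain ⟨B, hBP, hBmax⟩ := P.exists_maximal hne
    obtain ⟨hBS, hBindep⟩ : B ⊆ S ∧ LinearIndependent ℝ (fun e : B => v e.1) := by
      have := Finset.mem_filter.1 hBP
      exact ⟨Finset.mem_powerset.1 this.1, this.2⟩
    obtain ⟨x, hx⟩ := solvable_of_indep v c B hBindep
    refine ⟨x, fun e heS => ?_⟩
    by_cases heB : e ∈ B
    · exact hx e heB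
    · have hdep : ¬ LinearIndependent ℝ (fun f : (insert e B : Finset E) => v f.1) := by
        intro h
        refine heB (hBmax (Finset.mem_filter.2
          ⟨Finset.mem_powerset.2 (Finset.insert_subset heS hBS), h⟩) (Finset.subset_insert e B)
          (Finset.mem_insert_self e B))
      obtain ⟨X, hXsub, hX⟩ := exists_circuit_subset v _ hdep
      have heX : e ∈ X := by
        by_contra heX
        have hXB : X ⊆ B := fun f hf =>
          (Finset.mem_insert.1 (hXsub hf)).resolve_left (fun h => heX (h ▸ hf))
        exact hX.1 (vec_indep_mono v hXB hBindep)
      obtain ⟨y, hy⟩ := hcirc X hX (hXsub.trans (Finset.insert_subset heS hBS))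
      obtain ⟨g, hg⟩ := (vec_mem_span_iff v _ _).1 (circuit_mem_span v hX heX)
      have herB : X.erase e ⊆ B := fun f hf => by
        obtain ⟨hfe, hfX⟩ := Finset.mem_erase.1 hf
        exact (Finset.mem_insert.1 (hXsub hfX)).resolve_left hfe
      have key : ∀ z : EuclideanSpace ℝ (Fin d),
          (inner ℝ (v e) z : ℝ) = ∑ f ∈ X.erase e, g f * inner ℝ (v f) z := by
        intro z
        rw [← hg, sum_inner]
        exact Finset.sum_congr rfl fun f _ => real_inner_smul_left _ _ _
      rw [key x, ← hy e heX, key y]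
      refine Finset.sum_congr rfl fun f hf => ?_
      rw [hx f (herB hf), hy f (Finset.mem_erase.1 hf).2]
end

section
/- Let E be a type, v : E → EuclideanSpace ℝ (Fin d), and c : E → ℝ. Let X and Y be distinct circuits of v forming a modular pair, i.e. the dimension (finrank over ℝ) of the span of {v e : e ∈ X ∪ Y} equals |X ∪ Y| − 2. If both X and Y are central, then every circuit Z of v with Z ⊆ X ∪ Y is central. (The central circuits of a Pythagorean arrangement form a linear class of circuits.) -/
lemma fredholm {d : ℕ} {ι : Type*} [Fintype ι] (w : ι → EuclideanSpace ℝ (Fin d)) (y : ι → ℝ)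
    (h : ∀ lam : ι → ℝ, ∑ i, lam i • w i = 0 → ∑ i, lam i * y i = 0) :
    ∃ x : EuclideanSpace ℝ (Fin d), ∀ i, (inner ℝ (w i) x : ℝ) = y i := by
  classical
  let A : EuclideanSpace ℝ (Fin d) →ₗ[ℝ] EuclideanSpace ℝ ι :=
    { toFun := fun x => WithLp.toLp 2 (fun i => (inner ℝ (w i) x : ℝ))
      map_add' := by intro a b; ext i; simp [inner_add_right]
      map_smul' := by intro a b; ext i; simp [inner_smul_right] }
  set K := LinearMap.range A with hK
  let yv : EuclideanSpace ℝ ι := WithLp.toLp 2 y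
  have hy : yv ∈ Kᗮᗮ := by
    rw [Submodule.mem_orthogonal]
    intro z hz
    have hz' : ∀ x : EuclideanSpace ℝ (Fin d), (inner ℝ (A x) z : ℝ) = 0 := by
      intro x
      exact (Submodule.mem_orthogonal K z).mp hz (A x) ⟨x, rfl⟩
    have hsum0 : ∑ i, z i • w i = 0 := by
      have hs := hz' (∑ i, z i • w i)
      rw [← inner_self_eq_zero (𝕜 := ℝ) (x := ∑ i, z i • w i)]
      rw [sum_inner]
      rw [PiLp.inner_apply] at hs
      simp only [RCLike.inner_apply, conj_trivial] at hs
      calc ∑ i, (inner ℝ (z i • w i) (∑ j, z j • w j) : ℝ)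
          = ∑ i, (inner ℝ (w i) (∑ j, z j • w j) : ℝ) * z i := by
            refine Finset.sum_congr rfl fun i _ => ?_
            rw [real_inner_smul_left]; ring
        _ = 0 := (Finset.sum_congr rfl fun i _ => mul_comm _ _).trans hs
    have h0 := h z hsum0
    rw [PiLp.inner_apply]
    simp only [RCLike.inner_apply, conj_trivial]
    exact (Finset.sum_congr rfl fun i _ => mul_comm _ _).trans h0
  rw [Submodule.orthogonal_orthogonal] at hy
  obtain ⟨x, hx⟩ := hy
  exact ⟨x, fun i => congrArg (fun f : EuclideanSpace ℝ ι => f i) hx⟩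

lemma circuit_dep {E : Type*} [DecidableEq E] {d : ℕ} (v : E → EuclideanSpace ℝ (Fin d))
    {X : Finset E} (hX : IsVecCircuit v X) :
    ∃ l : E → ℝ, (∀ e ∉ X, l e = 0) ∧ (∀ e ∈ X, l e ≠ 0) ∧ ∑ e ∈ X, l e • v e = 0 := by
  classical
  obtain ⟨g, hg, i₀, hi₀⟩ := Fintype.not_linearIndependent_iff.mp hX.1
  set l : E → ℝ := fun e => if h : e ∈ X then g ⟨e, h⟩ else 0 with hl
  have hsumX : ∑ e ∈ X, l e • v e = 0 := by
    rw [← Finset.sum_coe_sort X (fun e => l e • v e)]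
    rw [← hg]
    refine Finset.sum_congr rfl fun j _ => ?_
    simp [hl, j.2]
  refine ⟨l, fun e he => by simp [hl, he], ?_, hsumX⟩
  intro e he hzero
  have hne : (i₀ : E) ≠ e := by
    intro heq
    apply hi₀
    have : l i₀ = g i₀ := by simp [hl, i₀.2]
    rw [← this, heq, hzero]
  have hsub : X.erase e ⊂ X := Finset.erase_ssubset he
  have hind := Fintype.linearIndependent_iff.mp (hX.2 _ hsub)
  have hsum' : ∑ j : (X.erase e : Finset E), l j • v j = 0 := by
    rw [Finset.sum_coe_sort (X.erase e) (fun j => l j • v j)]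
    rw [Finset.sum_erase X (by rw [hzero, zero_smul])]
    exact hsumX
  have := hind (fun j => l j) hsum' ⟨i₀, Finset.mem_erase.mpr ⟨hne, i₀.2⟩⟩
  simp only [hl, dif_pos i₀.2] at this
  exact hi₀ (by simpa using this)

/-- If distinct circuits `X` and `Y` of `v` form a modular pair (the span of the vectors
indexed by `X ∪ Y` has dimension `|X ∪ Y| - 2`) and both are central, then every circuit
`Z ⊆ X ∪ Y` is central: central circuits form a linear class. -/
theorem central_circuits_linear_class
    {E : Type*} [DecidableEq E] {d : ℕ} (v : E → EuclideanSpace ℝ (Fin d)) (c : E → ℝ)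
    (X Y : Finset E) (hXY : X ≠ Y)
    (hX : IsVecCircuit v X) (hY : IsVecCircuit v Y)
    (hmod : Module.finrank ℝ (Submodule.span ℝ (v '' ↑(X ∪ Y))) = (X ∪ Y).card - 2)
    (hXc : IsCentral v c X) (hYc : IsCentral v c Y) :
    ∀ Z : Finset E, IsVecCircuit v Z → Z ⊆ X ∪ Y → IsCentral v c Z := by
  classical
  intro Z hZ hZU
  obtain ⟨lX, hlX0, hlXne, hlXsum⟩ := circuit_dep v hX
  obtain ⟨lY, hlY0, hlYne, hlYsum⟩ := circuit_dep v hY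
  obtain ⟨xX, hxX⟩ := hXc
  obtain ⟨xY, hxY⟩ := hYc
  set U : Finset E := X ∪ Y with hU
  -- neither circuit is contained in the other
  have hXnY : ∃ e ∈ X, e ∉ Y := by
    by_contra h
    push_neg at h
    have hss : X ⊂ Y := (Finset.ssubset_iff_subset_ne).mpr ⟨fun e he => h e he, hXY⟩
    exact hX.1 (hY.2 X hss)
  have hYnX : ∃ e ∈ Y, e ∉ X := by
    by_contra h
    push_neg at h
    have hss : Y ⊂ X := (Finset.ssubset_iff_subset_ne).mpr ⟨fun e he => h e he, hXY.symm⟩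
    exact hY.1 (hX.2 Y hss)
  obtain ⟨e₁, he₁X, he₁Y⟩ := hXnY
  obtain ⟨e₂, he₂Y, he₂X⟩ := hYnX
  -- the linear combination map
  let B : (↥U → ℝ) →ₗ[ℝ] EuclideanSpace ℝ (Fin d) :=
    Fintype.linearCombination ℝ (fun e : ↥U => v e)
  have hBapply : ∀ f : ↥U → ℝ, B f = ∑ e : ↥U, f e • v e :=
    fun f => Fintype.linearCombination_apply ℝ (fun e : ↥U => v (↑e : E)) f
  have hrange : LinearMap.range B = Submodule.span ℝ (v '' (U : Set E)) := by
    rw [Fintype.range_linearCombination]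
    congr 1
    exact (Set.image_eq_range v (U : Set E)).symm
  -- elements of the kernel
  have memker : ∀ l : E → ℝ, (∀ e ∉ U, l e = 0) → (∑ e ∈ U, l e • v e = 0) →
      (fun e : ↥U => l e) ∈ LinearMap.ker B := by
    intro l hl0 hlsum
    rw [LinearMap.mem_ker, hBapply]
    rw [Finset.sum_coe_sort U (fun e => l e • v e)]
    exact hlsum
  -- lX, lY viewed in the kernel
  have hlXU : ∑ e ∈ U, lX e • v e = 0 := by
    rw [← Finset.sum_subset (Finset.subset_union_left (s₂ := Y))
      (fun e _ he => by rw [hlX0 e he, zero_smul])]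
    exact hlXsum
  have hlYU : ∑ e ∈ U, lY e • v e = 0 := by
    rw [← Finset.sum_subset (Finset.subset_union_right (s₁ := X))
      (fun e _ he => by rw [hlY0 e he, zero_smul])]
    exact hlYsum
  set lamX : ↥U → ℝ := fun e => lX e with hlamX
  set lamY : ↥U → ℝ := fun e => lY e with hlamY
  have hlamXk : lamX ∈ LinearMap.ker B :=
    memker lX (fun e he => hlX0 e (fun h => he (Finset.mem_union_left Y h))) hlXU
  have hlamYk : lamY ∈ LinearMap.ker B :=
    memker lY (fun e he => hlY0 e (fun h => he (Finset.mem_union_right X h))) hlYU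
  -- linear independence of lamX, lamY
  have hind : LinearIndependent ℝ ![lamX, lamY] := by
    rw [LinearIndependent.pair_iff]
    intro s t hst
    have h1 : s * lX e₁ + t * lY e₁ = 0 := congrFun hst ⟨e₁, Finset.mem_union_left Y he₁X⟩
    have h2 : s * lX e₂ + t * lY e₂ = 0 := congrFun hst ⟨e₂, Finset.mem_union_right X he₂Y⟩
    rw [hlY0 e₁ he₁Y, mul_zero, add_zero] at h1
    rw [hlX0 e₂ he₂X, mul_zero, zero_add] at h2
    exact ⟨(mul_eq_zero.mp h1).resolve_right (hlXne e₁ he₁X),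
      (mul_eq_zero.mp h2).resolve_right (hlYne e₂ he₂Y)⟩
  have hspan_le : Submodule.span ℝ (Set.range ![lamX, lamY]) ≤ LinearMap.ker B := by
    rw [Submodule.span_le, Set.range_subset_iff]
    intro i
    fin_cases i
    · exact hlamXk
    · exact hlamYk
  have hfr_span : Module.finrank ℝ (Submodule.span ℝ (Set.range ![lamX, lamY])) = 2 := by
    rw [finrank_span_eq_card hind]
    simp
  -- rank-nullity
  have hrn := LinearMap.finrank_range_add_finrank_ker B
  have hdom : Module.finrank ℝ ((↥U → ℝ)) = U.card := by
    rw [Module.finrank_pi]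
    exact Fintype.card_coe U
  rw [hdom, hrange, hmod] at hrn
  have hker2 : Module.finrank ℝ (LinearMap.ker B) = 2 := by
    have hle : 2 ≤ Module.finrank ℝ (LinearMap.ker B) := by
      rw [← hfr_span]
      exact Submodule.finrank_mono hspan_le
    omega
  have hkereq : Submodule.span ℝ (Set.range ![lamX, lamY]) = LinearMap.ker B := by
    apply Submodule.eq_of_le_of_finrank_le hspan_le
    rw [hker2, hfr_span]
  -- sums against c vanish for lamX, lamY
  have hcX : ∑ e : ↥U, lamX e * c e = 0 := by
    rw [Finset.sum_coe_sort U (fun e => lX e * c e)]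
    rw [← Finset.sum_subset (Finset.subset_union_left (s₂ := Y))
      (fun e _ he => by rw [hlX0 e he, zero_mul])]
    calc ∑ e ∈ X, lX e * c e = ∑ e ∈ X, (inner ℝ (lX e • v e) xX : ℝ) := by
          refine Finset.sum_congr rfl fun e he => ?_
          rw [real_inner_smul_left, hxX e he]
      _ = (inner ℝ (∑ e ∈ X, lX e • v e) xX : ℝ) := (sum_inner _ _ _).symm
      _ = 0 := by rw [hlXsum, inner_zero_left]
  have hcY : ∑ e : ↥U, lamY e * c e = 0 := by
    rw [Finset.sum_coe_sort U (fun e => lY e * c e)]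
    rw [← Finset.sum_subset (Finset.subset_union_right (s₁ := X))
      (fun e _ he => by rw [hlY0 e he, zero_mul])]
    calc ∑ e ∈ Y, lY e * c e = ∑ e ∈ Y, (inner ℝ (lY e • v e) xY : ℝ) := by
          refine Finset.sum_congr rfl fun e he => ?_
          rw [real_inner_smul_left, hxY e he]
      _ = (inner ℝ (∑ e ∈ Y, lY e • v e) xY : ℝ) := (sum_inner _ _ _).symm
      _ = 0 := by rw [hlYsum, inner_zero_left]
  -- apply Fredholm on Z
  have hfred : ∀ lam : ↥Z → ℝ, ∑ i, lam i • v (↑i : E) = 0 →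
      ∑ i : ↥Z, lam i * c (↑i : E) = 0 := by
    intro lam hlam
    set l : E → ℝ := fun e => if h : e ∈ Z then lam ⟨e, h⟩ else 0 with hldef
    have hlZ : ∑ e ∈ Z, l e • v e = 0 := by
      rw [← Finset.sum_coe_sort Z (fun e => l e • v e), ← hlam]
      refine Finset.sum_congr rfl fun j _ => ?_
      simp [hldef, j.2]
    have hmem : (fun e : ↥U => l e) ∈ LinearMap.ker B := by
      apply memker
      · intro e he
        exact dif_neg (fun h => he (hZU h))
      · rw [← Finset.sum_subset hZU (fun e _ he => by rw [hldef]; simp [he])]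
        exact hlZ
    rw [← hkereq] at hmem
    have hrangeset : Set.range ![lamX, lamY] = {lamX, lamY} := by
      ext f
      simp [Fin.exists_fin_two, eq_comm, or_comm]
    rw [hrangeset, Submodule.mem_span_pair] at hmem
    obtain ⟨a, b, hab⟩ := hmem
    have hcomp : ∑ e : ↥U, l e * c e = 0 := by
      calc ∑ e : ↥U, l e * c e
          = ∑ e : ↥U, (a * lamX e + b * lamY e) * c e := by
            refine Finset.sum_congr rfl fun e _ => ?_
            rw [← congrFun hab e]
            simp [mul_comm]
        _ = a * ∑ e : ↥U, lamX e * c e + b * ∑ e : ↥U, lamY e * c e := by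
            rw [Finset.mul_sum, Finset.mul_sum, ← Finset.sum_add_distrib]
            refine Finset.sum_congr rfl fun e _ => by ring
        _ = 0 := by rw [hcX, hcY]; ring
    rw [Finset.sum_coe_sort U (fun e => l e * c e)] at hcomp
    rw [← Finset.sum_subset hZU (fun e _ he => by rw [hldef]; simp [he])] at hcomp
    rw [← Finset.sum_coe_sort Z (fun e => l e * c e)] at hcomp
    rw [← hcomp]
    refine Finset.sum_congr rfl fun j _ => ?_
    simp [hldef, j.2]
  obtain ⟨x, hx⟩ := fredholm (fun i : ↥Z => v i) (fun i => c i) hfred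
  exact ⟨x, fun e he => hx ⟨e, he⟩⟩
end

section
/- (Three-term Plücker relations.) Let n ≥ 2 and let e : Fin (n−2) → (Fin n → ℝ) be a family of row vectors. For x, y : Fin n → ℝ, write [x, y; e] for the determinant of the n × n matrix whose rows are x, y, e 0, e 1, …, e (n−3) in this order. Then for all a, b, c, d : Fin n → ℝ, [a, b; e]·[c, d; e] − [a, c; e]·[b, d; e] + [a, d; e]·[b, c; e] = 0. -/
/-- The bracket `[x, y; e]`: the determinant of the `n × n` matrix whose rows are
`x, y, e 0, e 1, …, e (n − 3)` in this order. -/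
noncomputable def bracket {n : ℕ} (hn : 2 ≤ n) (e : Fin (n - 2) → Fin n → ℝ)
    (x y : Fin n → ℝ) : ℝ :=
  Matrix.det (Matrix.of fun i : Fin n =>
    if h0 : (i : ℕ) = 0 then x
    else if h1 : (i : ℕ) = 1 then y
    else e ⟨(i : ℕ) - 2, by have := i.isLt; omega⟩)

section PluckerAux

variable {n : ℕ}

private def pmat (e : Fin (n - 2) → Fin n → ℝ) (x y : Fin n → ℝ) :
    Matrix (Fin n) (Fin n) ℝ :=
  Matrix.of fun i : Fin n =>
    if h0 : (i : ℕ) = 0 then x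
    else if h1 : (i : ℕ) = 1 then y
    else e ⟨(i : ℕ) - 2, by have := i.isLt; omega⟩

private lemma bracket_eq (hn : 2 ≤ n) (e : Fin (n - 2) → Fin n → ℝ) (x y : Fin n → ℝ) :
    bracket hn e x y = (pmat e x y).det := rfl

private lemma pmat_row_e (e : Fin (n - 2) → Fin n → ℝ) (x y : Fin n → ℝ)
    (k : Fin (n - 2)) (hk : (k : ℕ) + 2 < n) :
    pmat e x y ⟨(k : ℕ) + 2, hk⟩ = e k := by
  funext j
  simp only [pmat, Matrix.of_apply]
  rw [dif_neg (show ¬((k : ℕ) + 2 = 0) by omega),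
    dif_neg (show ¬((k : ℕ) + 2 = 1) by omega)]
  congr 1

private lemma pmat_update0 (hn : 2 ≤ n) (e : Fin (n - 2) → Fin n → ℝ) (x x' y : Fin n → ℝ) :
    pmat e x y = (pmat e x' y).updateRow ⟨0, by omega⟩ x := by
  ext i j
  rcases eq_or_ne i ⟨0, by omega⟩ with h | h
  · subst h; simp [pmat, Matrix.updateRow_self]
  · rw [Matrix.updateRow_ne h]
    have h' : (i : ℕ) ≠ 0 := fun hh => h (Fin.ext hh)
    simp [pmat, h']

private lemma brk_add_left (hn : 2 ≤ n) (e : Fin (n - 2) → Fin n → ℝ) (x x' y : Fin n → ℝ) :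
    bracket hn e (x + x') y = bracket hn e x y + bracket hn e x' y := by
  rw [bracket_eq, bracket_eq, bracket_eq, pmat_update0 hn e (x + x') 0 y,
    pmat_update0 hn e x 0 y, pmat_update0 hn e x' 0 y, Matrix.det_updateRow_add]

private lemma brk_smul_left (hn : 2 ≤ n) (e : Fin (n - 2) → Fin n → ℝ) (r : ℝ) (x y : Fin n → ℝ) :
    bracket hn e (r • x) y = r * bracket hn e x y := by
  rw [bracket_eq, bracket_eq, pmat_update0 hn e (r • x) 0 y,
    pmat_update0 hn e x 0 y, Matrix.det_updateRow_smul]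

private lemma brk_self (hn : 2 ≤ n) (e : Fin (n - 2) → Fin n → ℝ) (x : Fin n → ℝ) :
    bracket hn e x x = 0 := by
  rw [bracket_eq]
  refine Matrix.det_zero_of_row_eq (M := pmat e x x)
    (i := ⟨0, by omega⟩) (j := ⟨1, by omega⟩) (by simp [Fin.ext_iff]) ?_
  funext j
  simp [pmat]

private lemma brk_swap (hn : 2 ≤ n) (e : Fin (n - 2) → Fin n → ℝ) (x y : Fin n → ℝ) :
    bracket hn e y x = - bracket hn e x y := by
  have h01 : (⟨0, by omega⟩ : Fin n) ≠ ⟨1, by omega⟩ := by simp [Fin.ext_iff]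
  have hmat : pmat e y x =
      (pmat e x y).submatrix (Equiv.swap (⟨0, by omega⟩ : Fin n) ⟨1, by omega⟩) id := by
    ext i j
    rcases eq_or_ne i ⟨0, by omega⟩ with h | h
    · subst h
      simp [pmat, Matrix.submatrix_apply, Equiv.swap_apply_left]
    rcases eq_or_ne i ⟨1, by omega⟩ with h1 | h1
    · subst h1
      simp [pmat, Matrix.submatrix_apply, Equiv.swap_apply_right]
    · rw [Matrix.submatrix_apply, Equiv.swap_apply_of_ne_of_ne h h1, id]
      have h0' : (i : ℕ) ≠ 0 := fun hh => h (Fin.ext hh)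
      have h1' : (i : ℕ) ≠ 1 := fun hh => h1 (Fin.ext hh)
      simp [pmat, h0', h1']
  rw [bracket_eq, bracket_eq, hmat, Matrix.det_permute, Equiv.Perm.sign_swap h01]
  simp

private lemma brk_e_left (hn : 2 ≤ n) (e : Fin (n - 2) → Fin n → ℝ)
    (k : Fin (n - 2)) (y : Fin n → ℝ) :
    bracket hn e (e k) y = 0 := by
  have hk : (k : ℕ) + 2 < n := by have := k.isLt; omega
  rw [bracket_eq]
  refine Matrix.det_zero_of_row_eq (M := pmat e (e k) y)
    (i := ⟨0, by omega⟩) (j := ⟨(k : ℕ) + 2, hk⟩) (by simp [Fin.ext_iff]) ?_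
  rw [pmat_row_e e (e k) y k hk]
  funext j
  simp [pmat]

private lemma brk_left_span (hn : 2 ≤ n) (e : Fin (n - 2) → Fin n → ℝ)
    {w : Fin n → ℝ} (hw : w ∈ Submodule.span ℝ (Set.range e)) (y : Fin n → ℝ) :
    bracket hn e w y = 0 := by
  let φ : (Fin n → ℝ) →ₗ[ℝ] ℝ :=
    { toFun := fun x => bracket hn e x y
      map_add' := fun x x' => brk_add_left hn e x x' y
      map_smul' := fun r x => by simpa using brk_smul_left hn e r x y }
  have hle : Submodule.span ℝ (Set.range e) ≤ LinearMap.ker φ := by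
    rw [Submodule.span_le]
    rintro _ ⟨k, rfl⟩
    exact brk_e_left hn e k y
  exact hle hw

private lemma brk_of_dep (hn : 2 ≤ n) (e : Fin (n - 2) → Fin n → ℝ)
    (hdep : ¬ LinearIndependent ℝ e) (x y : Fin n → ℝ) :
    bracket hn e x y = 0 := by
  by_contra hB
  have hdet : (pmat e x y).det ≠ 0 := by rwa [bracket_eq] at hB
  have hu : IsUnit (pmat e x y) :=
    (Matrix.isUnit_iff_isUnit_det _).2 (isUnit_iff_ne_zero.2 hdet)
  have hrows : LinearIndependent ℝ (fun i => pmat e x y i) :=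
    Matrix.linearIndependent_rows_iff_isUnit.2 hu
  have hcomp := hrows.comp
    (fun k : Fin (n - 2) => (⟨(k : ℕ) + 2, by have := k.isLt; omega⟩ : Fin n))
    (fun k k' hkk => by
      have : (k : ℕ) + 2 = (k' : ℕ) + 2 := congrArg Fin.val hkk
      exact Fin.ext (by omega))
  apply hdep
  have heq : ((fun i => pmat e x y i) ∘
      (fun k : Fin (n - 2) => (⟨(k : ℕ) + 2, by have := k.isLt; omega⟩ : Fin n))) = e :=
    funext fun k => pmat_row_e e x y k (by have := k.isLt; omega)
  rwa [heq] at hcomp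

private lemma plucker_key {V : Type*} (B : V → V → ℝ)
    (hself : ∀ x, B x x = 0) (hswap : ∀ x y, B y x = -B x y)
    (c1 c2 : ℝ) (a b c d : V)
    (hB : ∀ y, B a y = c1 * B b y + c2 * B c y) :
    B a b * B c d - B a c * B b d + B a d * B b c = 0 := by
  rw [hB b, hB c, hB d, hself b, hself c, hswap b c]
  ring

end PluckerAux

/-- The three-term Plücker relations:
`[a, b; e]·[c, d; e] − [a, c; e]·[b, d; e] + [a, d; e]·[b, c; e] = 0`. -/
theorem plucker_three_term
    {n : ℕ} (hn : 2 ≤ n) (e : Fin (n - 2) → Fin n → ℝ) (a b c d : Fin n → ℝ) :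
    bracket hn e a b * bracket hn e c d
      - bracket hn e a c * bracket hn e b d
      + bracket hn e a d * bracket hn e b c = 0 := by
  by_cases hdep : LinearIndependent ℝ e
  swap
  · simp [brk_of_dep hn e hdep]
  set W := Submodule.span ℝ (Set.range e) with hW
  have hWrank : Module.finrank ℝ W = n - 2 := by
    rw [hW, finrank_span_eq_card hdep, Fintype.card_fin]
  have hq : Module.finrank ℝ ((Fin n → ℝ) ⧸ W) = 2 := by
    have h := W.finrank_quotient_add_finrank
    rw [hWrank, Module.finrank_fin_fun] at h
    omega
  have h3 : ¬ LinearIndependent ℝ ![W.mkQ a, W.mkQ b, W.mkQ c] := by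
    intro h
    have hc := h.fintype_card_le_finrank
    rw [hq] at hc
    simp at hc
  obtain ⟨g, hg, i, hi⟩ := Fintype.not_linearIndependent_iff.mp h3
  rw [Fin.sum_univ_three] at hg
  simp only [Matrix.cons_val_zero, Matrix.cons_val_one, Matrix.head_cons,
    Matrix.cons_val_two, Matrix.tail_cons] at hg
  have hmem : g 0 • a + g 1 • b + g 2 • c ∈ W := by
    rw [← Submodule.Quotient.mk_eq_zero]
    have : W.mkQ (g 0 • a + g 1 • b + g 2 • c) = 0 := by
      rw [map_add, map_add, map_smul, map_smul, map_smul]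
      exact hg
    simpa using this
  have hlin : ∀ y, g 0 * bracket hn e a y + g 1 * bracket hn e b y
      + g 2 * bracket hn e c y = 0 := by
    intro y
    have h0 := brk_left_span hn e hmem y
    rw [brk_add_left, brk_add_left, brk_smul_left, brk_smul_left, brk_smul_left] at h0
    linarith
  fin_cases i
  · have hi' : g 0 ≠ 0 := by simpa using hi
    exact plucker_key (bracket hn e) (brk_self hn e) (brk_swap hn e)
      (-(g 1) / g 0) (-(g 2) / g 0) a b c d
      (fun y => by
        rw [div_mul_eq_mul_div, div_mul_eq_mul_div, ← add_div, eq_div_iff hi']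
        linear_combination hlin y)
  · have hi' : g 1 ≠ 0 := by simpa using hi
    have k := plucker_key (bracket hn e) (brk_self hn e) (brk_swap hn e)
      (-(g 0) / g 1) (-(g 2) / g 1) b a c d
      (fun y => by
        rw [div_mul_eq_mul_div, div_mul_eq_mul_div, ← add_div, eq_div_iff hi']
        linear_combination hlin y)
    linear_combination -k + bracket hn e c d * brk_swap hn e a b
  · have hi' : g 2 ≠ 0 := by simpa using hi
    have k := plucker_key (bracket hn e) (brk_self hn e) (brk_swap hn e)
      (-(g 0) / g 2) (-(g 1) / g 2) c a b d
      (fun y => by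
        rw [div_mul_eq_mul_div, div_mul_eq_mul_div, ← add_div, eq_div_iff hi']
        linear_combination hlin y)
    linear_combination k - bracket hn e b d * brk_swap hn e a c
      + bracket hn e a d * brk_swap hn e b c
end

section
/- Let M be a matroid on a finite ground set E and let I be a nonempty downward-closed family of subsets of E (an order ideal). Then the following are equivalent: (1) I is a modular ideal of M, i.e. {e} ∈ I for every non-loop e of M and A ∪ B ∈ I for every modular pair A, B ∈ I; (2) the set I ∩ 𝒞(M) of circuits of M belonging to I is a linear class of circuits of M, every independent set of M belongs to I, and I satisfies modular extension by circuits. -/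
open Set

/-- The rank of a set `S` in a matroid `M`: the largest cardinality of an independent
subset of `S`. -/
noncomputable def Matroid.rk' {α : Type*} (M : Matroid α) (S : Set α) : ℕ :=
  sSup (Set.ncard '' {I : Set α | M.Indep I ∧ I ⊆ S})

/-- A circuit of `M`: a minimal dependent set, i.e. a dependent set all of whose proper
subsets are independent. -/
def Matroid.IsCircuit' {α : Type*} (M : Matroid α) (C : Set α) : Prop :=
  M.Dep C ∧ ∀ D : Set α, D ⊂ C → M.Indep D

/-- `S` and `T` form a modular pair in `M`: `rk(S ∩ T) + rk(S ∪ T) = rk S + rk T`. -/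
def Matroid.ModularPairSets {α : Type*} (M : Matroid α) (S T : Set α) : Prop :=
  M.rk' (S ∩ T) + M.rk' (S ∪ T) = M.rk' S + M.rk' T

/-- A modular ideal of `M`: a nonempty downward-closed family of subsets containing `{e}`
for every non-loop `e` and closed under unions of modular pairs. -/
def Matroid.ModularIdeal {α : Type*} (M : Matroid α) (I : Set (Set α)) : Prop :=
  I.Nonempty ∧ (∀ A B : Set α, A ⊆ B → B ∈ I → A ∈ I) ∧
    (∀ e : α, M.Indep {e} → {e} ∈ I) ∧
    (∀ A B : Set α, A ∈ I → B ∈ I → M.ModularPairSets A B → A ∪ B ∈ I)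

/-- A linear class of circuits of `M`: a set `L` of circuits such that whenever
`X, Y ∈ L` form a modular pair, every circuit `Z ⊆ X ∪ Y` belongs to `L`. -/
def Matroid.LinearClass {α : Type*} (M : Matroid α) (L : Set (Set α)) : Prop :=
  (∀ C ∈ L, M.IsCircuit' C) ∧
    ∀ X ∈ L, ∀ Y ∈ L, M.ModularPairSets X Y →
      ∀ Z : Set α, M.IsCircuit' Z → Z ⊆ X ∪ Y → Z ∈ L

/-- `I` satisfies modular extension by circuits. -/
def Matroid.ModExtByCircuits {α : Type*} (M : Matroid α) (I : Set (Set α)) : Prop :=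
  ∀ X ∈ I, M.IsCircuit' X → ∀ S ∈ I, ∀ e : α, e ∈ X → X ⊆ S ∪ {e} → S ∪ {e} ∈ I



section Aux
variable {α : Type*} [Fintype α] {M : Matroid α} {S T C : Set α} {e : α}

lemma rset_ne (S : Set α) : (Set.ncard '' {I : Set α | M.Indep I ∧ I ⊆ S}).Nonempty :=
  ⟨_, ⟨∅, ⟨M.empty_indep, empty_subset _⟩, rfl⟩⟩

lemma rset_bdd (S : Set α) : BddAbove (Set.ncard '' {I : Set α | M.Indep I ∧ I ⊆ S}) := by
  refine ⟨(univ : Set α).ncard, ?_⟩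
  rintro n ⟨J, -, rfl⟩
  exact ncard_le_ncard (subset_univ J) finite_univ

lemma le_rk' (hJ : M.Indep T) (hJS : T ⊆ S) : T.ncard ≤ M.rk' S :=
  le_csSup (rset_bdd S) ⟨T, ⟨hJ, hJS⟩, rfl⟩

lemma exists_rk'_max (S : Set α) : ∃ J, M.Indep J ∧ J ⊆ S ∧ J.ncard = M.rk' S := by
  have h := Nat.sSup_mem (rset_ne (M := M) S) (rset_bdd S)
  obtain ⟨J, hJ, hcard⟩ := h
  exact ⟨J, hJ.1, hJ.2, hcard⟩

lemma rk'_le_ncard (S : Set α) : M.rk' S ≤ S.ncard := by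
  refine csSup_le (rset_ne S) ?_
  rintro n ⟨J, ⟨-, hJS⟩, rfl⟩
  exact ncard_le_ncard hJS (toFinite S)

lemma rk'_mono (h : S ⊆ T) : M.rk' S ≤ M.rk' T := by
  obtain ⟨J, hJ, hJS, hcard⟩ := exists_rk'_max (M := M) S
  exact hcard ▸ le_rk' hJ (hJS.trans h)

lemma Matroid.Indep.rk'_eq (h : M.Indep S) : M.rk' S = S.ncard :=
  le_antisymm (rk'_le_ncard S) (le_rk' h subset_rfl)

lemma indep_of_rk'_eq (h : M.rk' S = S.ncard) : M.Indep S := by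
  obtain ⟨J, hJ, hJS, hcard⟩ := exists_rk'_max (M := M) S
  have : J = S := eq_of_subset_of_ncard_le hJS (by omega) (toFinite S)
  exact this ▸ hJ

end Aux

set_option linter.unusedSectionVars false

section Aux2
variable {α : Type*} [Fintype α] {M : Matroid α} {S T C : Set α} {e : α}

lemma subset_grd (hE : M.E = Set.univ) (S : Set α) : S ⊆ M.E := hE.symm ▸ subset_univ S

/-- a rank maximizer spans. -/
lemma exists_spanning_max (hE : M.E = Set.univ) (S : Set α) :
    ∃ J, M.Indep J ∧ J ⊆ S ∧ J.ncard = M.rk' S ∧ S ⊆ M.closure J := by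
  obtain ⟨J, hJ, hJS, hcard⟩ := exists_rk'_max (M := M) S
  refine ⟨J, hJ, hJS, hcard, fun x hx => ?_⟩
  by_cases hxJ : x ∈ J
  · exact M.subset_closure J (subset_grd hE J) hxJ
  by_contra hxc
  have hins : M.Indep (insert x J) := by
    rw [hJ.insert_indep_iff_of_notMem hxJ]
    exact ⟨by rw [hE]; trivial, hxc⟩
  have hle := le_rk' hins (insert_subset hx hJS)
  rw [ncard_insert_of_notMem hxJ (toFinite J)] at hle
  omega

lemma indep_card_le_of_subset_closure (hE : M.E = Set.univ) (hK : M.Indep S)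
    (hJ : M.Indep T) (h : S ⊆ M.closure T) : S.ncard ≤ T.ncard := by
  by_contra hlt
  push_neg at hlt
  have henc : T.encard < S.encard := by
    rw [← (toFinite T).cast_ncard_eq, ← (toFinite S).cast_ncard_eq]
    exact_mod_cast hlt
  obtain ⟨x, hxmem, hxind⟩ := hJ.augment hK henc
  have hxJ : x ∉ T := hxmem.2
  rw [hJ.insert_indep_iff_of_notMem hxJ] at hxind
  exact hxind.2 (h hxmem.1)

lemma rk'_insert_of_mem_closure (hE : M.E = Set.univ) (he : e ∈ M.closure S) :
    M.rk' (insert e S) = M.rk' S := by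
  refine le_antisymm ?_ (rk'_mono (subset_insert _ _))
  obtain ⟨J, hJ, hJS, hcard, hspan⟩ := exists_spanning_max hE S
  obtain ⟨K, hK, hKS, hKcard⟩ := exists_rk'_max (M := M) (insert e S)
  have hSJ : M.closure S ⊆ M.closure J :=
    M.closure_subset_closure_of_subset_closure hspan
  have hKcl : K ⊆ M.closure J := by
    refine hKS.trans (insert_subset (hSJ he) ?_)
    exact (M.subset_closure S (subset_grd hE S)).trans hSJ
  have := indep_card_le_of_subset_closure hE hK hJ hKcl
  omega

end Aux2

section Aux3
variable {α : Type*} [Fintype α] {M : Matroid α} {S T C : Set α} {e : α}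

lemma Matroid.IsCircuit'.nonempty (h : M.IsCircuit' C) : C.Nonempty := by
  rw [nonempty_iff_ne_empty]
  rintro rfl
  exact h.1.not_indep M.empty_indep

lemma Matroid.IsCircuit'.diff_indep (h : M.IsCircuit' C) (he : e ∈ C) : M.Indep (C \ {e}) :=
  h.2 _ (sdiff_singleton_ssubset.2 he)

lemma Matroid.IsCircuit'.mem_closure_diff (hE : M.E = Set.univ) (h : M.IsCircuit' C) (he : e ∈ C) :
    e ∈ M.closure (C \ {e}) := by
  by_contra hec
  have hind : M.Indep (insert e (C \ {e})) := by
    rw [(h.diff_indep he).insert_indep_iff_of_notMem (by simp)]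
    exact ⟨by rw [hE]; trivial, hec⟩
  rw [insert_diff_singleton, insert_eq_self.2 he] at hind
  exact h.1.not_indep hind

lemma Matroid.IsCircuit'.rk'_add_one (h : M.IsCircuit' C) : M.rk' C + 1 = C.ncard := by
  obtain ⟨e, he⟩ := h.nonempty
  have h1 : C.ncard ≤ M.rk' C + 1 := by
    have := le_rk' (h.diff_indep he) diff_subset
    have h2 := ncard_diff_singleton_add_one he (toFinite C)
    omega
  have h3 : M.rk' C ≠ C.ncard := fun hc => h.1.not_indep (indep_of_rk'_eq hc)
  have h4 := rk'_le_ncard (M := M) C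
  omega

lemma exists_circuit_of_dep (hE : M.E = Set.univ) (hS : M.Dep S) :
    ∃ C, C ⊆ S ∧ M.IsCircuit' C := by
  have key : ∀ n (S : Set α), S.ncard ≤ n → M.Dep S → ∃ C, C ⊆ S ∧ M.IsCircuit' C := by
    intro n
    induction n with
    | zero =>
      intro S hcard hS
      rw [Nat.le_zero, ncard_eq_zero (toFinite S)] at hcard
      exact absurd M.empty_indep (hcard ▸ hS).not_indep
    | succ n ih =>
      intro S hcard hS
      by_cases hmin : ∀ D : Set α, D ⊂ S → M.Indep D
      · exact ⟨S, subset_rfl, hS, hmin⟩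
      push_neg at hmin
      obtain ⟨D, hDS, hD⟩ := hmin
      have hDdep : M.Dep D := ⟨hD, subset_grd hE D⟩
      have hlt := ncard_lt_ncard hDS (toFinite S)
      obtain ⟨C, hCD, hC⟩ := ih D (by omega) hDdep
      exact ⟨C, hCD.trans hDS.subset, hC⟩
  exact key S.ncard S le_rfl hS

end Aux3

section Main
variable {α : Type*} [Fintype α] {M : Matroid α} {I : Set (Set α)} {A B C S : Set α} {e : α}

lemma modPair_symm (h : M.ModularPairSets A B) : M.ModularPairSets B A := by
  unfold Matroid.ModularPairSets at *
  rw [inter_comm B A, union_comm B A]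
  omega

/-- Core step lemma for the backward direction. -/
lemma core_step (hE : M.E = Set.univ)
    (hdc : ∀ A B : Set α, A ⊆ B → B ∈ I → A ∈ I)
    (hext : M.ModExtByCircuits I)
    (n : ℕ)
    (IH : ∀ A B : Set α, A ∈ I → B ∈ I → M.ModularPairSets A B →
      (A ∪ B).ncard ≤ M.rk' (A ∪ B) + n → A ∪ B ∈ I)
    (hA : A ∈ I) (hB : B ∈ I) (hmp : M.ModularPairSets A B)
    (hcard : (A ∪ B).ncard ≤ M.rk' (A ∪ B) + n + 1)
    (hC : M.IsCircuit' C) (hCA : C ⊆ A) (he : e ∈ C)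
    (hcase : e ∉ B ∨ C ⊆ B) : A ∪ B ∈ I := by
  have heA : e ∈ A := hCA he
  have hecl : e ∈ M.closure (C \ {e}) := hC.mem_closure_diff hE he
  set A' := A \ {e} with hA'
  set B' := B \ {e} with hB'
  have hclA' : e ∈ M.closure A' :=
    M.closure_subset_closure (diff_subset_diff_left hCA) hecl
  have hAins : insert e A' = A := by rw [hA', insert_diff_singleton, insert_eq_self.2 heA]
  have hrkA : M.rk' A' = M.rk' A := by
    rw [← hAins]; exact (rk'_insert_of_mem_closure hE hclA').symm
  have hUeq : A' ∪ B' = (A ∪ B) \ {e} := (union_diff_distrib).symm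
  have hclU : e ∈ M.closure (A' ∪ B') :=
    M.closure_subset_closure subset_union_left hclA'
  have hUins : insert e (A' ∪ B') = A ∪ B := by
    rw [hUeq, insert_diff_singleton]
    exact insert_eq_self.2 (mem_union_left B heA)
  have hrkU : M.rk' (A' ∪ B') = M.rk' (A ∪ B) := by
    rw [← hUins]; exact (rk'_insert_of_mem_closure hE hclU).symm
  have hIeq : A' ∩ B' = (A ∩ B) \ {e} := by
    rw [hA', hB']; ext x; simp only [mem_inter_iff, mem_diff, mem_singleton_iff]; tauto
  have hrkB : M.rk' B' = M.rk' B ∧ M.rk' (A' ∩ B') = M.rk' (A ∩ B) := by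
    rcases hcase with heB | hCB
    · constructor
      · rw [hB', diff_singleton_eq_self heB]
      · rw [hIeq, diff_singleton_eq_self (fun h => heB h.2)]
    · have heB : e ∈ B := hCB he
      have hclB' : e ∈ M.closure B' :=
        M.closure_subset_closure (diff_subset_diff_left hCB) hecl
      have hBins : insert e B' = B := by
        rw [hB', insert_diff_singleton, insert_eq_self.2 heB]
      have hclI : e ∈ M.closure (A' ∩ B') := by
        refine M.closure_subset_closure ?_ hecl
        rw [hIeq]
        exact diff_subset_diff_left (subset_inter hCA hCB)
      have hIins : insert e (A' ∩ B') = A ∩ B := by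
        rw [hIeq, insert_diff_singleton]
        exact insert_eq_self.2 ⟨heA, heB⟩
      constructor
      · rw [← hBins]; exact (rk'_insert_of_mem_closure hE hclB').symm
      · rw [← hIins]; exact (rk'_insert_of_mem_closure hE hclI).symm
  have hmp' : M.ModularPairSets A' B' := by
    unfold Matroid.ModularPairSets at *
    rw [hrkA, hrkB.1, hrkB.2, hrkU]
    exact hmp
  have hcard' : (A' ∪ B').ncard ≤ M.rk' (A' ∪ B') + n := by
    have h1 : (A' ∪ B').ncard + 1 = (A ∪ B).ncard := by
      rw [hUeq]; exact ncard_diff_singleton_add_one (mem_union_left B heA) (toFinite _)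
    rw [hrkU]; omega
  have hU' : A' ∪ B' ∈ I := IH A' B' (hdc A' A diff_subset hA) (hdc B' B diff_subset hB)
    hmp' hcard'
  have hfin : (A' ∪ B') ∪ {e} ∈ I := by
    refine hext C (hdc C A hCA hA) hC (A' ∪ B') hU' e he ?_
    rw [union_singleton, hUins]
    exact (hCA.trans subset_union_left)
  rwa [union_singleton, hUins] at hfin

end Main

section Main2
variable {α : Type*} [Fintype α] {M : Matroid α} {I : Set (Set α)} {A B C S : Set α} {e : α}

lemma bwd_union (hE : M.E = Set.univ)
    (hdc : ∀ A B : Set α, A ⊆ B → B ∈ I → A ∈ I)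
    (hind : ∀ S : Set α, M.Indep S → S ∈ I)
    (hext : M.ModExtByCircuits I) :
    ∀ n (A B : Set α), A ∈ I → B ∈ I → M.ModularPairSets A B →
      (A ∪ B).ncard ≤ M.rk' (A ∪ B) + n → A ∪ B ∈ I := by
  intro n
  induction n with
  | zero =>
    intro A B _ _ _ hcard
    have := rk'_le_ncard (M := M) (A ∪ B)
    exact hind _ (indep_of_rk'_eq (by omega))
  | succ n ih =>
    intro A B hA hB hmp hcard
    by_cases hU : M.Indep (A ∪ B)
    · exact hind _ hU
    by_cases hAi : M.Indep A
    · by_cases hBi : M.Indep B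
      · -- both independent: modular pair forces the union independent, contradiction
        exfalso
        have h1 : M.rk' (A ∩ B) = (A ∩ B).ncard := (hAi.subset inter_subset_left).rk'_eq
        have h2 : M.rk' A = A.ncard := hAi.rk'_eq
        have h3 : M.rk' B = B.ncard := hBi.rk'_eq
        have h4 := ncard_inter_add_ncard_union A B (toFinite A) (toFinite B)
        have h5 := rk'_le_ncard (M := M) (A ∪ B)
        unfold Matroid.ModularPairSets at hmp
        exact hU (indep_of_rk'_eq (by omega))
      · -- B is dependent : circuit inside B, use core_step with roles swapped
        obtain ⟨C, hCB, hC⟩ := exists_circuit_of_dep hE ⟨hBi, subset_grd hE B⟩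
        have hcard' : (B ∪ A).ncard ≤ M.rk' (B ∪ A) + n + 1 := by
          rwa [union_comm B A]
        have hres : B ∪ A ∈ I := by
          by_cases hCA : C ⊆ A
          · obtain ⟨e, he⟩ := hC.nonempty
            exact core_step hE hdc hext n ih hB hA (modPair_symm hmp) hcard' hC hCB he
              (Or.inr hCA)
          · obtain ⟨e, heC, heA⟩ := not_subset.1 hCA
            exact core_step hE hdc hext n ih hB hA (modPair_symm hmp) hcard' hC hCB heC
              (Or.inl heA)
        rwa [union_comm B A] at hres
    · -- A is dependent
      obtain ⟨C, hCA, hC⟩ := exists_circuit_of_dep hE ⟨hAi, subset_grd hE A⟩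
      by_cases hCB : C ⊆ B
      · obtain ⟨e, he⟩ := hC.nonempty
        exact core_step hE hdc hext n ih hA hB hmp hcard hC hCA he (Or.inr hCB)
      · obtain ⟨e, heC, heB⟩ := not_subset.1 hCB
        exact core_step hE hdc hext n ih hA hB hmp hcard hC hCA heC (Or.inl heB)

lemma fwd_indep (hne : I.Nonempty)
    (hdc : ∀ A B : Set α, A ⊆ B → B ∈ I → A ∈ I)
    (hsing : ∀ e : α, M.Indep {e} → {e} ∈ I)
    (hun : ∀ A B : Set α, A ∈ I → B ∈ I → M.ModularPairSets A B → A ∪ B ∈ I) :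
    ∀ S : Set α, M.Indep S → S ∈ I := by
  have key : ∀ n (S : Set α), S.ncard ≤ n → M.Indep S → S ∈ I := by
    intro n
    induction n with
    | zero =>
      intro S hcard _
      rw [Nat.le_zero, ncard_eq_zero (toFinite S)] at hcard
      obtain ⟨T, hT⟩ := hne
      exact hcard ▸ hdc ∅ T (empty_subset T) hT
    | succ n ih =>
      intro S hcard hS
      rcases S.eq_empty_or_nonempty with rfl | ⟨e, heS⟩
      · obtain ⟨T, hT⟩ := hne
        exact hdc ∅ T (empty_subset T) hT
      have hS' : M.Indep (S \ {e}) := hS.subset diff_subset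
      have hc1 : (S \ {e}).ncard + 1 = S.ncard := ncard_diff_singleton_add_one heS (toFinite S)
      have hS'I : S \ {e} ∈ I := ih _ (by omega) hS'
      have he1 : M.Indep {e} := hS.subset (singleton_subset_iff.2 heS)
      have hUeq : {e} ∪ (S \ {e}) = S := by
        rw [singleton_union, insert_diff_singleton]
        exact insert_eq_self.2 heS
      have hmp : M.ModularPairSets {e} (S \ {e}) := by
        unfold Matroid.ModularPairSets
        have hIeq : {e} ∩ (S \ {e}) = (∅ : Set α) := by
          ext x; simp only [mem_inter_iff, mem_singleton_iff, mem_diff, mem_empty_iff_false]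
          tauto
        rw [hIeq, hUeq, M.empty_indep.rk'_eq, he1.rk'_eq, hS'.rk'_eq, hS.rk'_eq,
          ncard_empty, ncard_singleton]
        omega
      have := hun {e} (S \ {e}) (hsing e he1) hS'I hmp
      rwa [hUeq] at this
  exact fun S => key S.ncard S le_rfl

lemma fwd_ext (hE : M.E = Set.univ)
    (hdc : ∀ A B : Set α, A ⊆ B → B ∈ I → A ∈ I)
    (hun : ∀ A B : Set α, A ∈ I → B ∈ I → M.ModularPairSets A B → A ∪ B ∈ I) :
    M.ModExtByCircuits I := by
  intro X hX hXc S hS e heX hXS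
  by_cases heS : e ∈ S
  · have : S ∪ {e} = S := by
      rw [union_singleton]; exact insert_eq_self.2 heS
    rwa [this]
  have hXi : X ∩ S = X \ {e} := by
    ext x
    simp only [mem_inter_iff, mem_diff, mem_singleton_iff]
    constructor
    · rintro ⟨hx, hxS⟩
      exact ⟨hx, fun h => heS (h ▸ hxS)⟩
    · rintro ⟨hx, hxe⟩
      refine ⟨hx, ?_⟩
      rcases hXS hx with h | h
      · exact h
      · exact absurd h hxe
  have hXu : X ∪ S = S ∪ {e} :=
    subset_antisymm (union_subset hXS subset_union_left)
      (union_subset subset_union_right (singleton_subset_iff.2 (mem_union_left S heX)))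
  have hdiffS : X \ {e} ⊆ S := by rw [← hXi]; exact inter_subset_right
  have hecl : e ∈ M.closure S :=
    M.closure_subset_closure hdiffS (hXc.mem_closure_diff hE heX)
  have hr1 : M.rk' (X ∩ S) = M.rk' X := by
    rw [hXi, (hXc.diff_indep heX).rk'_eq]
    have := hXc.rk'_add_one
    have := ncard_diff_singleton_add_one heX (toFinite X)
    omega
  have hr2 : M.rk' (X ∪ S) = M.rk' S := by
    rw [hXu, union_singleton]
    exact rk'_insert_of_mem_closure hE hecl
  have hmp : M.ModularPairSets X S := by
    unfold Matroid.ModularPairSets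
    rw [hr1, hr2]
  have := hun X S hX hS hmp
  rwa [hXu] at this


end Main2

/-- A nonempty downward-closed family `I` is a modular ideal of `M` iff its circuits form a
linear class, it contains every independent set, and it satisfies modular extension by
circuits. -/
theorem modularIdeal_iff_linearClass
    {α : Type*} [Fintype α] (M : Matroid α) (hE : M.E = Set.univ)
    (I : Set (Set α)) (hne : I.Nonempty)
    (hdc : ∀ A B : Set α, A ⊆ B → B ∈ I → A ∈ I) :
    M.ModularIdeal I ↔
      (M.LinearClass (I ∩ {C : Set α | M.IsCircuit' C}) ∧
        (∀ S : Set α, M.Indep S → S ∈ I) ∧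
        M.ModExtByCircuits I) := by
  constructor
  · rintro ⟨-, -, hsing, hun⟩
    refine ⟨⟨fun C hC => hC.2, ?_⟩, fwd_indep hne hdc hsing hun, fwd_ext hE hdc hun⟩
    intro X hX Y hY hmp Z hZ hZXY
    exact ⟨hdc Z (X ∪ Y) hZXY (hun X Y hX.1 hY.1 hmp), hZ⟩
  · rintro ⟨-, hind, hext⟩
    refine ⟨hne, hdc, fun e he => hind _ he, fun A B hA hB hmp => ?_⟩
    exact bwd_union hE hdc hind hext (A ∪ B).ncard A B hA hB hmp (Nat.le_add_left _ _)
end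

section
/- Let M be a matroid on a finite ground set E and let I be a modular ideal of M. Then every independent set of M belongs to I. -/
open Set

theorem rk'_of_indep {α : Type*} [Fintype α] (M : Matroid α) {S : Set α}
    (hS : M.Indep S) : M.rk' S = S.ncard := by
  unfold Matroid.rk'
  apply le_antisymm
  · refine csSup_le ⟨S.ncard, ⟨S, ⟨hS, subset_rfl⟩, rfl⟩⟩ ?_
    rintro n ⟨J, ⟨_, hJS⟩, rfl⟩
    exact Set.ncard_le_ncard hJS S.toFinite
  · apply le_csSup
    · refine ⟨Fintype.card α, ?_⟩
      rintro n ⟨J, _, rfl⟩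
      calc J.ncard ≤ (Set.univ : Set α).ncard := Set.ncard_le_ncard (subset_univ J) (Set.univ (α := α)).toFinite
        _ = Fintype.card α := by simp [Set.ncard_univ, Nat.card_eq_fintype_card]
    · exact ⟨S, ⟨hS, subset_rfl⟩, rfl⟩

/-- Every independent set of `M` belongs to every modular ideal of `M`. -/
theorem indep_mem_modularIdeal
    {α : Type*} [Fintype α] (M : Matroid α) (hE : M.E = Set.univ)
    (I : Set (Set α)) (hI : M.ModularIdeal I) :
    ∀ S : Set α, M.Indep S → S ∈ I := by
  obtain ⟨⟨B, hB⟩, hdown, hsingle, hunion⟩ := hI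
  have hempty : (∅ : Set α) ∈ I := hdown ∅ B (empty_subset B) hB
  intro S
  refine Set.Finite.induction_on (motive := fun S _ => M.Indep S → S ∈ I) S (Set.toFinite S) (fun _ => hempty) ?_
  intro e S' heS' hfin ih hind
  have hS' : M.Indep S' := hind.subset (subset_insert e S')
  have he : M.Indep {e} := hind.subset (by simp)
  have hmp : M.ModularPairSets {e} S' := by
    unfold Matroid.ModularPairSets
    have h1 : ({e} : Set α) ∩ S' = ∅ := by
      simp [Set.inter_comm, Set.inter_eq_left.mpr]
      exact fun h => heS' h
    have h2 : ({e} : Set α) ∪ S' = insert e S' := (Set.insert_eq e S').symm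
    rw [h1, h2, rk'_of_indep M M.empty_indep, rk'_of_indep M hind,
      rk'_of_indep M he, rk'_of_indep M hS']
    rw [Set.ncard_insert_of_notMem heS' hfin]
    simp [Set.ncard_singleton]
    omega
  have := hunion {e} S' (hsingle e he) (ih hS') hmp
  rwa [Set.singleton_union] at this
end

section
/- Let M be a matroid on a finite ground set E with rank function rk, and let X and Y be distinct circuits of M. Then the following are equivalent: (1) X and Y form a modular pair, i.e. rk(X ∩ Y) + rk(X ∪ Y) = rk X + rk Y; (2) rk(X ∪ Y) = |X ∪ Y| − 2; (3) there exist a basis B of M and elements x ∈ X, y ∈ Y such that X = C_B(x) and Y = C_B(y), the fundamental circuits of x and y with respect to B; (4) for all distinct circuits U, V of M with U ∪ V ⊆ X ∪ Y, one has U ∪ V = X ∪ Y. -/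
open Set
set_option linter.unusedSectionVars false
set_option linter.unusedVariables false

namespace MPAux

variable {α : Type*} [Fintype α] {M : Matroid α}

lemma subE (hE : M.E = Set.univ) (S : Set α) : S ⊆ M.E := hE ▸ Set.subset_univ S

lemma basis_ncard_eq {I J S : Set α} (hI : M.IsBasis I S) (hJ : M.IsBasis J S) :
    I.ncard = J.ncard :=
  hI.restrict_isBase.ncard_eq_ncard_of_isBase hJ.restrict_isBase

lemma rk'_eq_ncard (hE : M.E = Set.univ) {I S : Set α} (hI : M.IsBasis I S) :
    M.rk' S = I.ncard := by
  unfold Matroid.rk'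
  have hmem : I.ncard ∈ Set.ncard '' {J : Set α | M.Indep J ∧ J ⊆ S} :=
    ⟨I, ⟨hI.indep, hI.subset⟩, rfl⟩
  apply le_antisymm
  · refine csSup_le ⟨I.ncard, hmem⟩ ?_
    rintro n ⟨J, ⟨hJind, hJS⟩, rfl⟩
    obtain ⟨J', hJ', hJJ'⟩ := hJind.subset_isBasis_of_subset hJS (subE hE S)
    exact (Set.ncard_le_ncard hJJ' (toFinite J')).trans (basis_ncard_eq hJ' hI).le
  · refine le_csSup ⟨Nat.card α, ?_⟩ hmem
    rintro n ⟨J, _, rfl⟩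
    exact (Set.ncard_le_ncard (Set.subset_univ J) (toFinite _)).trans_eq (Set.ncard_univ α)

lemma le_rk' (hE : M.E = Set.univ) {J S : Set α} (hJ : M.Indep J) (hJS : J ⊆ S) :
    J.ncard ≤ M.rk' S := by
  obtain ⟨I, hI⟩ := M.exists_isBasis S (subE hE S)
  rw [rk'_eq_ncard hE hI]
  obtain ⟨J', hJ', hJJ'⟩ := hJ.subset_isBasis_of_subset hJS (subE hE S)
  exact (Set.ncard_le_ncard hJJ' (toFinite J')).trans (basis_ncard_eq hJ' hI).le

lemma rk'_indep (hE : M.E = Set.univ) {S : Set α} (hS : M.Indep S) :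
    M.rk' S = S.ncard :=
  rk'_eq_ncard hE hS.isBasis_self

-- circuit facts
lemma circuit_nonempty {C : Set α} (hC : M.IsCircuit' C) : C.Nonempty :=
  hC.1.nonempty

lemma circuit_basis_diff {C : Set α} (hC : M.IsCircuit' C) {x : α} (hx : x ∈ C) :
    M.IsBasis (C \ {x}) C := by
  refine (hC.2 _ (Set.sdiff_singleton_ssubset.2 hx)).isBasis_of_forall_insert
    diff_subset (fun e he => ?_)
  have : e = x := by
    by_contra hne
    exact he.2 ⟨he.1, hne⟩
  subst this
  rw [Set.insert_diff_singleton, Set.insert_eq_of_mem hx]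
  exact hC.1

lemma rk'_circuit (hE : M.E = Set.univ) {C : Set α} (hC : M.IsCircuit' C) :
    M.rk' C + 1 = C.ncard := by
  obtain ⟨x, hx⟩ := circuit_nonempty hC
  rw [rk'_eq_ncard hE (circuit_basis_diff hC hx)]
  exact Set.ncard_diff_singleton_add_one hx (toFinite C)

lemma circuit_mem_closure_diff {C : Set α} (hC : M.IsCircuit' C) {x : α} (hx : x ∈ C) :
    x ∈ M.closure (C \ {x}) := by
  have hind := hC.2 (C \ {x}) (Set.sdiff_singleton_ssubset.2 hx)
  have hdep : M.Dep (insert x (C \ {x})) := by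
    rw [Set.insert_diff_singleton, Set.insert_eq_of_mem hx]
    exact hC.1
  exact (hind.insert_dep_iff.1 hdep).1

lemma circuit_diff_nonempty {X Y : Set α} (hX : M.IsCircuit' X) (hY : M.IsCircuit' Y)
    (hne : X ≠ Y) : (X \ Y).Nonempty := by
  rw [Set.diff_nonempty]
  intro hsub
  exact (hX.1.not_indep) (hY.2 X (hsub.ssubset_of_ne hne))

lemma rk'_le_add (hE : M.E = Set.univ) {T S : Set α} (hTS : T ⊆ S) :
    M.rk' S ≤ M.rk' T + (S \ T).ncard := by
  obtain ⟨I, hI⟩ := M.exists_isBasis T (subE hE T)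
  obtain ⟨J, hJ, hIJ⟩ := hI.indep.subset_isBasis_of_subset (hI.subset.trans hTS) (subE hE S)
  rw [rk'_eq_ncard hE hI, rk'_eq_ncard hE hJ]
  have hJd : J \ I ⊆ S \ T := by
    rintro e ⟨heJ, heI⟩
    refine ⟨hJ.subset heJ, fun heT => heI ?_⟩
    exact hI.mem_of_insert_indep heT (hJ.indep.subset (Set.insert_subset heJ hIJ))
  calc J.ncard = (I ∪ (J \ I)).ncard := by rw [Set.union_diff_cancel hIJ]
    _ ≤ I.ncard + (J \ I).ncard := Set.ncard_union_le _ _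
    _ ≤ I.ncard + (S \ T).ncard := by
        exact Nat.add_le_add_left (Set.ncard_le_ncard hJd (toFinite _)) _

lemma indep_ncard_le_of_subset_closure (hE : M.E = Set.univ) {J K : Set α}
    (hJ : M.Indep J) (hK : M.Indep K) (hJK : J ⊆ M.closure K) : J.ncard ≤ K.ncard := by
  obtain ⟨J', hJ', hJJ'⟩ := hJ.subset_isBasis_of_subset hJK (M.closure_subset_ground K)
  exact (Set.ncard_le_ncard hJJ' (toFinite _)).trans (basis_ncard_eq hJ' hK.isBasis_closure).le

lemma rk'_union_circuit (hE : M.E = Set.univ) {A C : Set α} (hC : M.IsCircuit' C)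
    {z : α} (hz : z ∈ C \ A) :
    M.rk' (A ∪ C) + 1 ≤ M.rk' A + (C \ A).ncard := by
  obtain ⟨I, hI⟩ := M.exists_isBasis A (subE hE A)
  set D : Set α := (C \ A) \ {z} with hD
  have hsub : A ∪ C ⊆ M.closure (I ∪ D) := by
    have hAcl : A ⊆ M.closure (I ∪ D) :=
      hI.subset_closure.trans (M.closure_subset_closure Set.subset_union_left)
    have hCz : C \ {z} ⊆ M.closure (I ∪ D) := by
      rintro e ⟨heC, hez⟩
      by_cases heA : e ∈ A
      · exact hAcl heA
      · exact M.subset_closure (I ∪ D) (subE hE _) (Or.inr ⟨⟨heC, heA⟩, hez⟩)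
    have hzcl : z ∈ M.closure (I ∪ D) :=
      (M.closure_subset_closure_of_subset_closure hCz)
        (circuit_mem_closure_diff hC hz.1)
    rintro e (heA | heC)
    · exact hAcl heA
    · by_cases hez : e = z
      · exact hez ▸ hzcl
      · exact hCz ⟨heC, hez⟩
  obtain ⟨J, hJ⟩ := M.exists_isBasis (A ∪ C) (subE hE _)
  obtain ⟨K, hK⟩ := M.exists_isBasis (I ∪ D) (subE hE _)
  rw [rk'_eq_ncard hE hJ, rk'_eq_ncard hE hI]
  have hJcl : J ⊆ M.closure K := by
    rw [hK.closure_eq_closure]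
    exact hJ.subset.trans hsub
  have h1 : J.ncard ≤ K.ncard :=
    indep_ncard_le_of_subset_closure hE hJ.indep hK.indep hJcl
  have h2 : K.ncard ≤ I.ncard + D.ncard :=
    (Set.ncard_le_ncard hK.subset (toFinite _)).trans (Set.ncard_union_le _ _)
  have h3 : D.ncard + 1 = (C \ A).ncard :=
    Set.ncard_diff_singleton_add_one hz (toFinite _)
  omega

lemma two_circuits_rk' (hE : M.E = Set.univ) {X Y : Set α}
    (hX : M.IsCircuit' X) (hY : M.IsCircuit' Y) (hne : X ≠ Y) :
    M.rk' (X ∪ Y) + 2 ≤ (X ∪ Y).ncard := by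
  obtain ⟨z, hzY, hzX⟩ := circuit_diff_nonempty hY hX hne.symm
  obtain ⟨I, hI⟩ := M.exists_isBasis (X ∪ Y) (subE hE _)
  rw [rk'_eq_ncard hE hI]
  obtain ⟨x, hxX, hxI⟩ : (X \ I).Nonempty := by
    rw [Set.diff_nonempty]
    exact fun hsub => hX.1.not_indep (hI.indep.subset hsub)
  have hkey : ∃ w ∈ (X ∪ Y) \ I, w ≠ x := by
    by_contra hcon
    push_neg at hcon
    have hsub : X ∪ Y ⊆ insert x I := by
      intro e he
      by_cases heI : e ∈ I
      · exact Set.mem_insert_of_mem _ heI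
      · exact (hcon e ⟨he, heI⟩) ▸ Set.mem_insert _ _
    have hzx : z ≠ x := fun h => hzX (h ▸ hxX)
    have hzI : z ∈ I := by
      rcases hsub (Set.mem_union_right X hzY) with h | h
      · exact absurd h hzx
      · exact h
    set I' : Set α := I \ {z} with hI'
    have hXx : X \ {x} ⊆ I' := by
      rintro e ⟨heX, hex⟩
      have : e ∈ insert x I := hsub (Or.inl heX)
      rcases this with h | h
      · exact absurd h hex
      · exact ⟨h, fun hez => hzX ((Set.mem_singleton_iff.1 hez) ▸ heX)⟩
    have hxcl : x ∈ M.closure I' :=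
      (M.closure_subset_closure hXx) (circuit_mem_closure_diff hX hxX)
    have hYz : Y \ {z} ⊆ M.closure I' := by
      rintro e ⟨heY, hez⟩
      have : e ∈ insert x I := hsub (Or.inr heY)
      rcases this with h | h
      · exact h ▸ hxcl
      · exact M.subset_closure I' (subE hE _) ⟨h, hez⟩
    have hzcl : z ∈ M.closure I' :=
      (M.closure_subset_closure_of_subset_closure hYz)
        (circuit_mem_closure_diff hY hzY)
    -- contradiction with independence of I
    have hIz : M.Indep (insert z I') := by
      rw [hI', Set.insert_diff_singleton, Set.insert_eq_of_mem hzI]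
      exact hI.indep
    have := ((hI.indep.diff {z}).insert_dep_iff).not.1 hIz.not_dep
    exact this ⟨hzcl, fun h => h.2 rfl⟩
  obtain ⟨w, hw, hwx⟩ := hkey
  have hxd : x ∈ (X ∪ Y) \ I := ⟨Or.inl hxX, hxI⟩
  have hpair : ({w, x} : Set α) ⊆ (X ∪ Y) \ I := by
    rintro e (rfl | rfl)
    · exact hw
    · exact hxd
  have h2 : 2 ≤ ((X ∪ Y) \ I).ncard := by
    rw [← Set.ncard_pair hwx]
    exact Set.ncard_le_ncard hpair (toFinite _)
  have := Set.ncard_diff_add_ncard_of_subset hI.subset (toFinite (X ∪ Y))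
  omega

lemma exists_circuit_subset (hE : M.E = Set.univ) {D : Set α} (hD : M.Dep D) :
    ∃ C, C ⊆ D ∧ M.IsCircuit' C := by
  have key : ∀ n (D : Set α), D.ncard ≤ n → M.Dep D → ∃ C, C ⊆ D ∧ M.IsCircuit' C := by
    intro n
    induction n with
    | zero =>
      intro D hcard hD
      rw [Nat.le_zero, Set.ncard_eq_zero (toFinite D)] at hcard
      exact absurd (hcard ▸ M.empty_indep) hD.not_indep
    | succ n ih =>
      intro D hcard hD
      by_cases h : ∀ D' : Set α, D' ⊂ D → M.Indep D'
      · exact ⟨D, Set.Subset.rfl, hD, h⟩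
      · push_neg at h
        obtain ⟨D', hss, hdep⟩ := h
        have hD' : M.Dep D' := ⟨hdep, subE hE D'⟩
        have hlt : D'.ncard < D.ncard := Set.ncard_lt_ncard hss (toFinite D)
        obtain ⟨C, hC1, hC2⟩ := ih D' (by omega) hD'
        exact ⟨C, hC1.trans hss.subset, hC2⟩
  exact key D.ncard D le_rfl hD

end MPAux

/-- Equivalent descriptions of modular pairs of distinct circuits `X`, `Y`:
(1) `X, Y` form a modular pair; (2) `rk(X ∪ Y) = |X ∪ Y| − 2`; (3) `X` and `Y` are
fundamental circuits `C_B(x)`, `C_B(y)` with respect to a common basis `B` of `M`;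
(4) no union of two distinct circuits is properly contained in `X ∪ Y`. -/
theorem modularPair_circuits_tfae
    {α : Type*} [Fintype α] (M : Matroid α) (hE : M.E = Set.univ)
    (X Y : Set α) (hX : M.IsCircuit' X) (hY : M.IsCircuit' Y) (hXY : X ≠ Y) :
    List.TFAE
      [M.rk' (X ∩ Y) + M.rk' (X ∪ Y) = M.rk' X + M.rk' Y,
       M.rk' (X ∪ Y) = (X ∪ Y).ncard - 2,
       ∃ B : Set α, M.IsBase B ∧ ∃ x ∈ X, ∃ y ∈ Y, X ⊆ insert x B ∧ Y ⊆ insert y B,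
       ∀ U V : Set α, M.IsCircuit' U → M.IsCircuit' V → U ≠ V →
         U ∪ V ⊆ X ∪ Y → U ∪ V = X ∪ Y] := by
  have hsub : ∀ S : Set α, S ⊆ M.E := fun S => hE ▸ Set.subset_univ S
  have hXYd : (X \ Y).Nonempty := MPAux.circuit_diff_nonempty hX hY hXY
  have hYXd : (Y \ X).Nonempty := MPAux.circuit_diff_nonempty hY hX hXY.symm
  have hrkX : M.rk' X + 1 = X.ncard := MPAux.rk'_circuit hE hX
  have hrkY : M.rk' Y + 1 = Y.ncard := MPAux.rk'_circuit hE hY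
  have hintss : X ∩ Y ⊂ X := by
    obtain ⟨x, hx, hx'⟩ := hXYd
    refine Set.inter_subset_left.ssubset_of_ne fun h => hx' ?_
    exact (Set.inter_eq_left.mp h) hx
  have hrkI : M.rk' (X ∩ Y) = (X ∩ Y).ncard :=
    MPAux.rk'_indep hE (hX.2 _ hintss)
  have hcard : (X ∩ Y).ncard + (X ∪ Y).ncard = X.ncard + Y.ncard :=
    Set.ncard_inter_add_ncard_union X Y (toFinite X) (toFinite Y)
  have hU2 : M.rk' (X ∪ Y) + 2 ≤ (X ∪ Y).ncard := MPAux.two_circuits_rk' hE hX hY hXY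
  tfae_have 1 ↔ 2 := by constructor <;> intro h <;> omega
  tfae_have 2 → 4 := by
    intro h2 U V hU hV hUV hsubXY
    by_contra hne
    obtain ⟨z, hzXY, hzUV⟩ := Set.exists_of_ssubset (hsubXY.ssubset_of_ne hne)
    have main : ∀ C, M.IsCircuit' C → C ⊆ X ∪ Y → z ∈ C → False := by
      intro C hC hCsub hzC
      have h5 : M.rk' ((U ∪ V) ∪ C) + 1 ≤ M.rk' (U ∪ V) + (C \ (U ∪ V)).ncard :=
        MPAux.rk'_union_circuit hE hC ⟨hzC, hzUV⟩
      have h6 : M.rk' (U ∪ V) + 2 ≤ (U ∪ V).ncard := MPAux.two_circuits_rk' hE hU hV hUV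
      have h7 : M.rk' (X ∪ Y) ≤ M.rk' ((U ∪ V) ∪ C) + ((X ∪ Y) \ ((U ∪ V) ∪ C)).ncard :=
        MPAux.rk'_le_add hE (Set.union_subset hsubXY hCsub)
      have h8 : ((X ∪ Y) \ ((U ∪ V) ∪ C)).ncard + ((U ∪ V) ∪ C).ncard = (X ∪ Y).ncard :=
        Set.ncard_diff_add_ncard_of_subset (Set.union_subset hsubXY hCsub) (toFinite _)
      have h9 : ((U ∪ V) ∪ C).ncard = (U ∪ V).ncard + (C \ (U ∪ V)).ncard := by
        rw [← Set.union_diff_self, Set.ncard_union_eq disjoint_sdiff_right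
          (toFinite _) (toFinite _)]
      omega
    rcases hzXY with hzX | hzY
    · exact main X hX Set.subset_union_left hzX
    · exact main Y hY Set.subset_union_right hzY
  tfae_have 4 → 3 := by
    intro h4
    obtain ⟨x, hxX, hxY⟩ := hXYd
    obtain ⟨y, hyY, hyX⟩ := hYXd
    set I : Set α := (X ∪ Y) \ {x, y} with hIdef
    have hI : M.Indep I := by
      by_contra hdep
      obtain ⟨Z, hZI, hZ⟩ := MPAux.exists_circuit_subset hE ⟨hdep, hsub I⟩
      have hZX : Z ≠ X := fun h => (hZI (h ▸ hxX)).2 (Or.inl rfl)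
      have h := h4 Z X hZ hX hZX
        (Set.union_subset (hZI.trans (Set.diff_subset.trans Set.Subset.rfl))
          Set.subset_union_left)
      have hy' : y ∈ Z ∪ X := by
        have : y ∈ X ∪ Y := Or.inr hyY
        rwa [← h] at this
      rcases hy' with h' | h'
      · exact (hZI h').2 (Or.inr rfl)
      · exact hyX h'
    obtain ⟨B, hB, hIB⟩ := hI.exists_isBase_superset
    refine ⟨B, hB, x, hxX, y, hyY, ?_, ?_⟩
    · intro e he
      by_cases hex : e = x
      · exact hex ▸ Set.mem_insert _ _
      · refine Set.mem_insert_of_mem _ (hIB ⟨Or.inl he, ?_⟩)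
        rintro (rfl | rfl)
        · exact hex rfl
        · exact hxY (hyX he).elim
    · intro e he
      by_cases hey : e = y
      · exact hey ▸ Set.mem_insert _ _
      · refine Set.mem_insert_of_mem _ (hIB ⟨Or.inr he, ?_⟩)
        rintro (rfl | rfl)
        · exact hxY he
        · exact hey rfl
  tfae_have 3 → 2 := by
    rintro ⟨B, hB, x, hxX, y, hyY, hXB, hYB⟩
    set I : Set α := (X ∪ Y) \ {x, y} with hIdef
    have hIB : I ⊆ B := by
      rintro e ⟨he, hexy⟩
      rcases he with h | h
      · rcases Set.mem_insert_iff.1 (hXB h) with rfl | h'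
        · exact absurd (Or.inl rfl) hexy
        · exact h'
      · rcases Set.mem_insert_iff.1 (hYB h) with rfl | h'
        · exact absurd (Or.inr rfl) hexy
        · exact h'
    have hle : I.ncard ≤ M.rk' (X ∪ Y) :=
      MPAux.le_rk' hE (hB.indep.subset hIB) Set.diff_subset
    have hcard2 : (X ∪ Y).ncard ≤ I.ncard + 2 := by
      have hsub2 : X ∪ Y ⊆ I ∪ {x, y} := by
        intro e he
        by_cases h : e ∈ ({x, y} : Set α)
        · exact Or.inr h
        · exact Or.inl ⟨he, h⟩
      have hpair : ({x, y} : Set α).ncard ≤ 2 := by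
        refine (Set.ncard_insert_le _ _).trans ?_
        simp
      calc (X ∪ Y).ncard ≤ (I ∪ {x, y}).ncard := Set.ncard_le_ncard hsub2 (toFinite _)
        _ ≤ I.ncard + ({x, y} : Set α).ncard := Set.ncard_union_le _ _
        _ ≤ I.ncard + 2 := by omega
    omega
  tfae_finish
end

section
/- Let E be a type, v : E → EuclideanSpace ℝ (Fin d) a family whose span is all of EuclideanSpace ℝ (Fin d), and c : E → ℝ. Then there exists a finite subset S ⊆ E of cardinality d + 1 that is central (i.e. there exists x with ⟪v e, x⟫ = c e for all e ∈ S) if and only if there exists a circuit X of v that is central. (A Pythagorean arrangement fails to be gain-generic exactly when some circuit of the matroid at infinity is central.) -/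
private lemma extend_central {E : Type*} {d : ℕ} (v : E → EuclideanSpace ℝ (Fin d)) (c : E → ℝ)
    (hspan : Submodule.span ℝ (Set.range v) = ⊤) :
    ∀ (n : ℕ) (T : Finset E), IsCentral v c T →
      ¬ LinearIndependent ℝ (fun e : T => v e.1) → T.card + n = d + 1 →
      ∃ S : Finset E, S.card = d + 1 ∧ IsCentral v c S := by
  classical
  intro n
  induction n with
  | zero => intro T hc _ hcard; exact ⟨T, by omega, hc⟩
  | succ n ih =>
    intro T hc hdep hcard
    set b : T → EuclideanSpace ℝ (Fin d) := fun e : T => v e.1 with hb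
    set W : Submodule ℝ (EuclideanSpace ℝ (Fin d)) := Submodule.span ℝ (Set.range b) with hW
    have hTW : ∀ f ∈ T, v f ∈ W := by
      intro f hf
      exact Submodule.subset_span ⟨⟨f, hf⟩, rfl⟩
    -- finrank W < T.card
    have hfr : Module.finrank ℝ W < T.card := by
      have h1 : Module.finrank ℝ W ≤ Fintype.card T := finrank_range_le_card b
      have h2 : Fintype.card T ≠ Module.finrank ℝ W := by
        intro h
        exact hdep (linearIndependent_iff_card_eq_finrank_span.mpr h)
      rw [Fintype.card_coe] at h1 h2
      omega
    have hWne : W ≠ ⊤ := by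
      intro h
      rw [h, finrank_top, finrank_euclideanSpace_fin] at hfr
      omega
    -- find e with v e ∉ W
    have hex : ∃ e : E, v e ∉ W := by
      by_contra h
      push_neg at h
      apply hWne
      refine top_le_iff.mp ?_
      rw [← hspan]
      exact Submodule.span_le.mpr (fun x ⟨e, he⟩ => he ▸ h e)
    obtain ⟨e, he⟩ := hex
    have heT : e ∉ T := fun h => he (hTW e h)
    -- the orthogonal direction
    set y : EuclideanSpace ℝ (Fin d) := v e - (W.orthogonalProjectionOnto (v e) : EuclideanSpace ℝ (Fin d)) with hy
    have hyo : y ∈ Wᗮ := Submodule.sub_starProjection_mem_orthogonal (K := W) (v e)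
    have hyne : y ≠ 0 := by
      intro h
      apply he
      have : v e = (W.orthogonalProjectionOnto (v e) : EuclideanSpace ℝ (Fin d)) := by
        rw [hy] at h; linear_combination (norm := module) h
      rw [this]; exact (W.orthogonalProjectionOnto (v e)).2
    have hinner_ey : (inner ℝ (v e) y : ℝ) ≠ 0 := by
      have hdec : (inner ℝ (v e) y : ℝ) =
          inner ℝ ((W.orthogonalProjectionOnto (v e) : EuclideanSpace ℝ (Fin d))) y + inner ℝ y y := by
        rw [← inner_add_left]
        congr 1
        rw [hy]; module
      have h0 : (inner ℝ ((W.orthogonalProjectionOnto (v e) : EuclideanSpace ℝ (Fin d))) y : ℝ) = 0 :=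
        (Submodule.mem_orthogonal W y).mp hyo _ (W.orthogonalProjectionOnto (v e)).2
      rw [hdec, h0, zero_add]
      exact fun h => hyne (inner_self_eq_zero.mp h)
    -- centrality of insert e T
    obtain ⟨x, hx⟩ := hc
    have hcen : IsCentral v c ↑(insert e T) := by
      refine ⟨x + ((c e - inner ℝ (v e) x) / inner ℝ (v e) y) • y, ?_⟩
      intro f hf
      rw [Finset.coe_insert, Set.mem_insert_iff] at hf
      rw [inner_add_right, real_inner_smul_right]
      rcases hf with rfl | hf
      · rw [div_mul_cancel₀ _ hinner_ey]; ring
      · have h0 : (inner ℝ (v f) y : ℝ) = 0 :=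
          (Submodule.mem_orthogonal W y).mp hyo _ (hTW f hf)
        rw [h0, mul_zero, add_zero]
        exact hx f hf
    -- dependence of insert e T
    have hdep' : ¬ LinearIndependent ℝ (fun g : (insert e T : Finset E) => v g.1) := by
      intro h
      apply hdep
      have := h.comp (fun g : T => (⟨g.1, Finset.mem_insert_of_mem g.2⟩ : (insert e T : Finset E)))
        (fun a b hab => by have h' := congrArg Subtype.val hab; exact Subtype.ext h')
      exact this
    exact ih (insert e T) hcen hdep' (by rw [Finset.card_insert_of_notMem heT]; omega)

/-- For a spanning family `v`, there is a central subset of cardinality `d + 1`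
if and only if there is a central circuit of `v`. -/
theorem exists_central_card_succ_iff_exists_central_circuit
    {E : Type*} {d : ℕ} (v : E → EuclideanSpace ℝ (Fin d)) (c : E → ℝ)
    (hspan : Submodule.span ℝ (Set.range v) = ⊤) :
    (∃ S : Finset E, S.card = d + 1 ∧ IsCentral v c S) ↔
      ∃ X : Finset E, IsVecCircuit v X ∧ IsCentral v c X := by
  classical
  have hfin : Module.finrank ℝ (EuclideanSpace ℝ (Fin d)) = d := finrank_euclideanSpace_fin
  have hdep_of_card : ∀ (Y : Finset E), d + 1 ≤ Y.card →
      ¬ LinearIndependent ℝ (fun e : Y => v e.1) := by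
    intro Y hY h
    have := h.fintype_card_le_finrank
    rw [Fintype.card_coe, hfin] at this
    omega
  constructor
  · rintro ⟨S, hScard, hScen⟩
    -- find a minimal dependent subset of S
    set P : Finset (Finset E) :=
      S.powerset.filter (fun Y => ¬ LinearIndependent ℝ (fun e : Y => v e.1)) with hP
    have hSP : S ∈ P := by
      rw [hP, Finset.mem_filter, Finset.mem_powerset]
      exact ⟨subset_rfl, hdep_of_card S (by omega)⟩
    obtain ⟨X, hXP, hXmin⟩ := P.exists_min_image Finset.card ⟨S, hSP⟩
    rw [hP, Finset.mem_filter, Finset.mem_powerset] at hXP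
    refine ⟨X, ⟨hXP.2, ?_⟩, ?_⟩
    · intro Y hY
      by_contra hYdep
      have hYP : Y ∈ P := by
        rw [hP, Finset.mem_filter, Finset.mem_powerset]
        exact ⟨hY.1.trans hXP.1, hYdep⟩
      have := hXmin Y hYP
      have := Finset.card_lt_card hY
      omega
    · obtain ⟨x, hx⟩ := hScen
      exact ⟨x, fun f hf => hx f (hXP.1 hf)⟩
  · rintro ⟨X, ⟨hXdep, hXmin⟩, hXcen⟩
    -- circuits have card ≤ d + 1
    have hXcard : X.card ≤ d + 1 := by
      by_contra h
      push_neg at h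
      obtain ⟨Y, hYX, hYcard⟩ := Finset.exists_subset_card_eq (show d + 1 ≤ X.card by omega)
      have hYss : Y ⊂ X := by
        refine Finset.ssubset_iff_subset_ne.mpr ⟨hYX, ?_⟩
        intro hEq
        rw [hEq] at hYcard
        omega
      exact hdep_of_card Y (by omega) (hXmin Y hYss)
    exact extend_central v c hspan (d + 1 - X.card) X hXcen hXdep (by omega)
end

section
/- Let w : Fin (d+1) → EuclideanSpace ℝ (Fin d) be a family of d + 1 vectors whose span is all of EuclideanSpace ℝ (Fin d). Then there is a unique subset X ⊆ Fin (d+1) that is a circuit of w (a minimal linearly dependent subset), and for every i : Fin (d+1), the family (w j)_{j ≠ i} is linearly independent if and only if i ∈ X. -/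
/-- A spanning family of `d + 1` vectors in `d`-space has a unique circuit `X`; moreover,
deleting an element `i` leaves a linearly independent family exactly when `i ∈ X`. -/
theorem unique_circuit_of_spanning_succ
    {d : ℕ} (w : Fin (d + 1) → EuclideanSpace ℝ (Fin d))
    (hspan : Submodule.span ℝ (Set.range w) = ⊤) :
    ∃ X : Finset (Fin (d + 1)),
      (IsVecCircuit w X ∧ ∀ Y : Finset (Fin (d + 1)), IsVecCircuit w Y → Y = X) ∧
      ∀ i : Fin (d + 1),
        (LinearIndependent ℝ (fun j : {j : Fin (d + 1) // j ≠ i} => w j.1) ↔ i ∈ X) := by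
  classical
  set T := Finsupp.linearCombination ℝ w with hT
  have hrangeT : LinearMap.range T = ⊤ := by
    rw [hT, Finsupp.range_linearCombination, hspan]
  have hrank : Module.finrank ℝ (LinearMap.ker T) = 1 := by
    have h1 := LinearMap.finrank_range_add_finrank_ker T
    have h2 : Module.finrank ℝ (LinearMap.range T) = d := by
      rw [hrangeT]; simp
    have h3 : Module.finrank ℝ (Fin (d+1) →₀ ℝ) = d + 1 := by simp
    omega
  have hex : ∃ c : Fin (d+1) →₀ ℝ, c ∈ LinearMap.ker T ∧ c ≠ 0 := by
    by_contra h
    push_neg at h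
    have hbot : LinearMap.ker T = ⊥ := by
      ext l
      simp only [Submodule.mem_bot]
      exact ⟨fun hl => by by_contra h0; exact h0 (h l hl), fun hl => by simp [hl]⟩
    rw [hbot] at hrank
    simp at hrank
  obtain ⟨c, hcker, hc0'⟩ := hex
  have hcgen : ∀ l : LinearMap.ker T, ∃ a : ℝ, a • (⟨c, hcker⟩ : LinearMap.ker T) = l :=
    (finrank_eq_one_iff_of_nonzero' (⟨c, hcker⟩ : LinearMap.ker T)
      (by simp [Subtype.ext_iff, hc0'])).1 hrank
  -- every nonzero kernel element has support = c.support
  have hsupp : ∀ l : Fin (d+1) →₀ ℝ, l ∈ LinearMap.ker T → l ≠ 0 → l.support = c.support := by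
    intro l hl hl0
    obtain ⟨a, ha⟩ := hcgen ⟨l, hl⟩
    have ha' : a • c = l := congrArg Subtype.val ha
    have ha0 : a ≠ 0 := by rintro rfl; simp at ha'; exact hl0 ha'.symm
    rw [← ha', Finsupp.support_smul_eq ha0]
  -- main characterization
  have key : ∀ s : Set (Fin (d+1)),
      LinearIndependent (ι := s) ℝ (w ∘ Subtype.val) ↔ ¬ (↑c.support : Set (Fin (d+1))) ⊆ s := by
    intro s
    rw [linearIndependent_comp_subtype_iff, linearIndepOn_iff]
    constructor
    · intro h hsub
      have hc : c ∈ Finsupp.supported ℝ ℝ s := fun i hi => hsub hi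
      exact hc0' (h c hc hcker)
    · intro h l hls hl0
      by_contra hlne
      exact h (by rw [← hsupp l hl0 hlne]; exact hls)
  refine ⟨c.support, ⟨⟨?_, ?_⟩, ?_⟩, ?_⟩
  · -- dependent on X
    have := (key (↑c.support : Set (Fin (d+1)))).not.2 (by simp)
    exact fun h => this h
  · -- proper subsets independent
    intro Y hY
    have hns : ¬ (↑c.support : Set (Fin (d+1))) ⊆ ↑Y := by
      rw [ssubset_iff_subset_not_subset] at hY
      exact fun h => hY.2 (fun x hx => h hx)
    exact (key (↑Y : Set (Fin (d+1)))).2 hns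
  · -- uniqueness
    intro Y hY
    have hdep := hY.1
    have hsub : c.support ⊆ Y := by
      by_contra h
      exact hdep ((key (↑Y : Set (Fin (d+1)))).2 (fun hss => h (fun x hx => hss hx)))
    by_contra hne
    have hss : c.support ⊂ Y := lt_of_le_of_ne hsub (fun h => hne h.symm)
    have hindep := hY.2 c.support hss
    have := (key (↑c.support : Set (Fin (d+1)))).not.2 (by simp)
    exact this hindep
  · -- deletion criterion
    intro i
    have hk := key {j : Fin (d+1) | j ≠ i}
    rw [show (LinearIndependent ℝ (fun j : {j : Fin (d + 1) // j ≠ i} => w j.1)) =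
        (LinearIndependent (ι := {j : Fin (d+1) | j ≠ i}) ℝ (w ∘ Subtype.val)) from rfl, hk]
    constructor
    · intro h
      by_contra hi
      exact h (fun x hx => by
        simp only [Set.mem_setOf_eq]
        rintro rfl
        exact hi (by simpa using hx))
    · intro hi hss
      exact (hss (by simpa using hi) : i ≠ i) rfl
end
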